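/- arXiv:1205.1451 — 4 statements merged into one kernel-verified Lean document; each statement's English description precedes it below -/
import Mathlib

section
/- Let τ = (1+√5)/2, σ = (1−√5)/2, and let α₁ = (−1,0,0), α₂ = ½(τ,1,σ), α₃ = (0,0,−1) in ℝ³. The orbit of the set {α₁, α₂, α₃} under the group of linear isometries of ℝ³ generated by the three reflections s_{α₁}, s_{α₂}, s_{α₃} is exactly the 30-element set consisting of the vectors (±1,0,0), (0,±1,0), (0,0,±1) together with all cyclic permutations of the coordinates of ½(±τ,±1,±σ) (the vertices of an icosidodecahedron, the root system of the Coxeter group H₃), and this 30-element set is invariant under the reflection s_α for every α in it. -/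
noncomputable section

open scoped RealInnerProductSpace

/-- sign predicate: `a = ±1` -/
def pm (a : ℝ) : Prop := a = 1 ∨ a = -1

abbrev E3 := EuclideanSpace ℝ (Fin 3)

def vec3 (a b c : ℝ) : E3 := WithLp.toLp 2 ![a, b, c]

/-- Reflection in the hyperplane orthogonal to `α`:
`λ ↦ λ − 2(⟪λ,α⟫/⟪α,α⟫)α`. -/
def sRefl (α x : E3) : E3 := x - (2 * (⟪x, α⟫ / ⟪α, α⟫)) • α

/-- The group of linear isometries of ℝ³ generated by the reflections `s_α`, `α ∈ S`. -/
def reflGroup (S : Set E3) : Subgroup (E3 ≃ₗᵢ[ℝ] E3) :=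
  Subgroup.closure {g | ∃ α ∈ S, ∀ x, g x = sRefl α x}

/-- The orbit of the set `S` under the group generated by the reflections in elements of `S`. -/
def orbitOf (S : Set E3) : Set E3 :=
  {x | ∃ g ∈ reflGroup S, ∃ r ∈ S, g r = x}

/-- The 6 vertices of an octahedron: `(±1,0,0), (0,±1,0), (0,0,±1)`. -/
def Oct : Set E3 :=
  {x | ∃ a, pm a ∧ (x = vec3 a 0 0 ∨ x = vec3 0 a 0 ∨ x = vec3 0 0 a)}

/-- The 12 vertices of a cuboctahedron: `(1/√2)(±1,±1,0)` and permutations. -/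
def Cuboct : Set E3 :=
  {x | ∃ a b, pm a ∧ pm b ∧
    (x = (Real.sqrt 2)⁻¹ • vec3 a b 0 ∨ x = (Real.sqrt 2)⁻¹ • vec3 a 0 b ∨
      x = (Real.sqrt 2)⁻¹ • vec3 0 a b)}

/-- The golden ratio τ. -/
def gr : ℝ := (1 + Real.sqrt 5) / 2

/-- The Galois conjugate σ of the golden ratio. -/
def gs : ℝ := (1 - Real.sqrt 5) / 2

/-- The vertices `½(±τ,±1,±σ)` and all cyclic permutations of the coordinates. -/
def H3extra : Set E3 :=
  {x | ∃ a b c, pm a ∧ pm b ∧ pm c ∧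
    (x = (2:ℝ)⁻¹ • vec3 (a * gr) b (c * gs) ∨ x = (2:ℝ)⁻¹ • vec3 (c * gs) (a * gr) b ∨
      x = (2:ℝ)⁻¹ • vec3 b (c * gs) (a * gr))}

/-- The 30 vertices of an icosidodecahedron, the root system of H₃. -/
def Icosid : Set E3 := Oct ∪ H3extra

def qmk (a b c d : ℝ) : Quaternion ℝ := ⟨a, b, c, d⟩

/-- The 8 Lipschitz units `±1, ±i, ±j, ±k`. -/
def Lip : Set (Quaternion ℝ) :=
  {x | ∃ a, pm a ∧ (x = qmk a 0 0 0 ∨ x = qmk 0 a 0 0 ∨ x = qmk 0 0 a 0 ∨ x = qmk 0 0 0 a)}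

/-- The 24 Hurwitz units: the Lipschitz units together with `½(±1 ± i ± j ± k)`. -/
def Hur : Set (Quaternion ℝ) :=
  Lip ∪ {x | ∃ a b c d, pm a ∧ pm b ∧ pm c ∧ pm d ∧ x = qmk (a / 2) (b / 2) (c / 2) (d / 2)}

/-- The 24 `dual' quaternions `(1/√2)(±a ± b)` for distinct `a, b ∈ {1, i, j, k}`. -/
def DualHur : Set (Quaternion ℝ) :=
  {x | ∃ a b, pm a ∧ pm b ∧
    (x = qmk (a / Real.sqrt 2) (b / Real.sqrt 2) 0 0 ∨
      x = qmk (a / Real.sqrt 2) 0 (b / Real.sqrt 2) 0 ∨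
      x = qmk (a / Real.sqrt 2) 0 0 (b / Real.sqrt 2) ∨
      x = qmk 0 (a / Real.sqrt 2) (b / Real.sqrt 2) 0 ∨
      x = qmk 0 (a / Real.sqrt 2) 0 (b / Real.sqrt 2) ∨
      x = qmk 0 0 (a / Real.sqrt 2) (b / Real.sqrt 2))}

/-- The 48-element binary octahedral set. -/
def BinOct : Set (Quaternion ℝ) := Hur ∪ DualHur

/-- The coordinate quadruple of a quaternion. -/
def qcoords (x : Quaternion ℝ) : Fin 4 → ℝ := ![x.re, x.imI, x.imJ, x.imK]

/-- The 96 unit quaternions with coordinates `½(0, ±τ, ±1, ±σ)` and all even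
permutations of the four coordinates. -/
def IcoExtra : Set (Quaternion ℝ) :=
  {x | ∃ p ∈ alternatingGroup (Fin 4), ∃ a b c, pm a ∧ pm b ∧ pm c ∧
    ∀ i, qcoords x i = ![0, a * gr, b, c * gs] (p i) / 2}

/-- The 120 icosians. -/
def Icosians : Set (Quaternion ℝ) := Hur ∪ IcoExtra

/-- The map sending a vector of ℝ³ to the corresponding pure quaternion. -/
def iota (x : E3) : Quaternion ℝ := qmk 0 (x 0) (x 1) (x 2)

abbrev E4 := EuclideanSpace ℝ (Fin 4)

/-- Reflection in the hyperplane of ℝ⁴ orthogonal to `α`. -/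
def sRefl4 (α x : E4) : E4 := x - (2 * (⟪x, α⟫ / ⟪α, α⟫)) • α

/-- Regard a quaternion as a vector in ℝ⁴ via its coordinates. -/
def qvec (x : Quaternion ℝ) : E4 := WithLp.toLp 2 ![x.re, x.imI, x.imJ, x.imK]
set_option linter.unreachableTactic false
set_option linter.unusedTactic false
set_option maxHeartbeats 1000000

-- ### auxiliary integer model for the H3 root system ###

abbrev R5 := ℤ√(5:ℤ)
def f5 : R5 →+* ℝ := Zsqrtd.toReal (by norm_num)
abbrev V3 := R5 × R5 × R5
def ipz (X A : V3) : R5 := X.1*A.1 + X.2.1*A.2.1 + X.2.2*A.2.2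
def reflz (A X : V3) : V3 :=
  (8*X.1 - ipz X A * A.1, 8*X.2.1 - ipz X A * A.2.1, 8*X.2.2 - ipz X A * A.2.2)
def m8 (Y : V3) : V3 := (8*Y.1, 8*Y.2.1, 8*Y.2.2)
def evV (v : V3) : E3 := vec3 (f5 v.1/4) (f5 v.2.1/4) (f5 v.2.2/4)

lemma vec3_smul (r a b c : ℝ) : r • vec3 a b c = vec3 (r*a) (r*b) (r*c) := by
  ext i
  fin_cases i <;> simp [vec3]

lemma vec3_sub (a b c d e f : ℝ) : vec3 a b c - vec3 d e f = vec3 (a-d) (b-e) (c-f) := by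
  ext i
  fin_cases i <;> simp [vec3]

lemma vec3_congr {a b c d e f : ℝ} (h1 : a = d) (h2 : b = e) (h3 : c = f) :
    vec3 a b c = vec3 d e f := by rw [h1, h2, h3]

lemma inner_vec3 (a b c d e f : ℝ) : ⟪vec3 a b c, vec3 d e f⟫ = a*d + b*e + c*f := by
  simp [vec3, PiLp.inner_apply, Fin.sum_univ_three]
  ring

lemma f5_mk (p q : ℤ) : f5 ⟨p, q⟩ = p + q * Real.sqrt 5 := by
  simp [f5, Zsqrtd.toReal_apply]

lemma evV_mk (p1 q1 p2 q2 p3 q3 : ℤ) :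
    evV (⟨p1,q1⟩,⟨p2,q2⟩,⟨p3,q3⟩) = vec3 ((p1+q1*Real.sqrt 5)/4) ((p2+q2*Real.sqrt 5)/4)
      ((p3+q3*Real.sqrt 5)/4) := by
  simp [evV, f5_mk]

lemma inner_evV (X A : V3) : ⟪evV X, evV A⟫ = f5 (ipz X A) / 16 := by
  simp only [evV, inner_vec3, ipz, map_add, map_mul]
  ring

lemma f5_sixteen : f5 (16 : R5) = 16 := map_ofNat f5 16

lemma inner_evV_self {A : V3} (hA : ipz A A = 16) : ⟪evV A, evV A⟫ = 1 := by
  rw [inner_evV, hA, f5_sixteen]; norm_num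

lemma sRefl_evV {A X Y : V3} (hA : ipz A A = 16) (h : reflz A X = m8 Y) :
    sRefl (evV A) (evV X) = evV Y := by
  have h1 := congrArg (fun v : V3 => f5 v.1) h
  have h2 := congrArg (fun v : V3 => f5 v.2.1) h
  have h3 := congrArg (fun v : V3 => f5 v.2.2) h
  simp only [reflz, m8, map_sub, map_mul, map_ofNat] at h1 h2 h3
  rw [sRefl, inner_evV, inner_evV_self hA]
  simp only [evV]
  rw [vec3_smul, vec3_sub]
  exact vec3_congr (by linear_combination h1 / 32) (by linear_combination h2 / 32)
    (by linear_combination h3 / 32)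

def rIso (α : E3) : E3 ≃ₗᵢ[ℝ] E3 := Submodule.reflection ((ℝ ∙ α)ᗮ)

lemma rIso_apply (α : E3) (hα : ⟪α,α⟫ = 1) (x : E3) : rIso α x = sRefl α x := by
  have hn : (‖α‖:ℝ)^2 = 1 := by rw [← real_inner_self_eq_norm_sq]; exact hα
  rw [rIso, Submodule.reflection_orthogonal_apply, Submodule.reflection_singleton_apply, sRefl, hα,
    real_inner_comm x α]
  norm_cast
  rw [hn]
  simp only [two_smul, div_one]
  module

lemma sRefl_invol (α : E3) (hα : ⟪α,α⟫ = 1) (y : E3) : sRefl α (sRefl α y) = y := by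
  simp only [sRefl, hα, inner_sub_left, real_inner_smul_left, div_one]
  module

def L30 : List V3 := [
  (⟨4,0⟩,⟨0,0⟩,⟨0,0⟩),
  (⟨0,0⟩,⟨4,0⟩,⟨0,0⟩),
  (⟨0,0⟩,⟨0,0⟩,⟨4,0⟩),
  (⟨-4,0⟩,⟨0,0⟩,⟨0,0⟩),
  (⟨0,0⟩,⟨-4,0⟩,⟨0,0⟩),
  (⟨0,0⟩,⟨0,0⟩,⟨-4,0⟩),
  (⟨1,1⟩,⟨2,0⟩,⟨1,-1⟩),
  (⟨1,-1⟩,⟨1,1⟩,⟨2,0⟩),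
  (⟨2,0⟩,⟨1,-1⟩,⟨1,1⟩),
  (⟨1,1⟩,⟨2,0⟩,⟨-1,1⟩),
  (⟨-1,1⟩,⟨1,1⟩,⟨2,0⟩),
  (⟨2,0⟩,⟨-1,1⟩,⟨1,1⟩),
  (⟨1,1⟩,⟨-2,0⟩,⟨1,-1⟩),
  (⟨1,-1⟩,⟨1,1⟩,⟨-2,0⟩),
  (⟨-2,0⟩,⟨1,-1⟩,⟨1,1⟩),
  (⟨1,1⟩,⟨-2,0⟩,⟨-1,1⟩),
  (⟨-1,1⟩,⟨1,1⟩,⟨-2,0⟩),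
  (⟨-2,0⟩,⟨-1,1⟩,⟨1,1⟩),
  (⟨-1,-1⟩,⟨2,0⟩,⟨1,-1⟩),
  (⟨1,-1⟩,⟨-1,-1⟩,⟨2,0⟩),
  (⟨2,0⟩,⟨1,-1⟩,⟨-1,-1⟩),
  (⟨-1,-1⟩,⟨2,0⟩,⟨-1,1⟩),
  (⟨-1,1⟩,⟨-1,-1⟩,⟨2,0⟩),
  (⟨2,0⟩,⟨-1,1⟩,⟨-1,-1⟩),
  (⟨-1,-1⟩,⟨-2,0⟩,⟨1,-1⟩),
  (⟨1,-1⟩,⟨-1,-1⟩,⟨-2,0⟩),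
  (⟨-2,0⟩,⟨1,-1⟩,⟨-1,-1⟩),
  (⟨-1,-1⟩,⟨-2,0⟩,⟨-1,1⟩),
  (⟨-1,1⟩,⟨-1,-1⟩,⟨-2,0⟩),
  (⟨-2,0⟩,⟨-1,1⟩,⟨-1,-1⟩)]

lemma hnorm : ∀ A ∈ L30, ipz A A = 16 := by decide

lemma hcl : ∀ A ∈ L30, ∀ X ∈ L30, ∃ Y ∈ L30, reflz A X = m8 Y := by decide

lemma Evc0 : evV (⟨4,0⟩,⟨0,0⟩,⟨0,0⟩) = vec3 1 0 0 := by
  rw [evV_mk]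
  try rw [vec3_smul]
  exact vec3_congr (by first | (simp only [gr, gs]; push_cast; ring) | (push_cast; ring) | norm_num) (by first | (simp only [gr, gs]; push_cast; ring) | (push_cast; ring) | norm_num) (by first | (simp only [gr, gs]; push_cast; ring) | (push_cast; ring) | norm_num)

lemma Evc1 : evV (⟨0,0⟩,⟨4,0⟩,⟨0,0⟩) = vec3 0 1 0 := by
  rw [evV_mk]
  try rw [vec3_smul]
  exact vec3_congr (by first | (simp only [gr, gs]; push_cast; ring) | (push_cast; ring) | norm_num) (by first | (simp only [gr, gs]; push_cast; ring) | (push_cast; ring) | norm_num) (by first | (simp only [gr, gs]; push_cast; ring) | (push_cast; ring) | norm_num)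

lemma Evc2 : evV (⟨0,0⟩,⟨0,0⟩,⟨4,0⟩) = vec3 0 0 1 := by
  rw [evV_mk]
  try rw [vec3_smul]
  exact vec3_congr (by first | (simp only [gr, gs]; push_cast; ring) | (push_cast; ring) | norm_num) (by first | (simp only [gr, gs]; push_cast; ring) | (push_cast; ring) | norm_num) (by first | (simp only [gr, gs]; push_cast; ring) | (push_cast; ring) | norm_num)

lemma Evc3 : evV (⟨-4,0⟩,⟨0,0⟩,⟨0,0⟩) = vec3 (-1) 0 0 := by
  rw [evV_mk]
  try rw [vec3_smul]
  exact vec3_congr (by first | (simp only [gr, gs]; push_cast; ring) | (push_cast; ring) | norm_num) (by first | (simp only [gr, gs]; push_cast; ring) | (push_cast; ring) | norm_num) (by first | (simp only [gr, gs]; push_cast; ring) | (push_cast; ring) | norm_num)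

lemma Evc4 : evV (⟨0,0⟩,⟨-4,0⟩,⟨0,0⟩) = vec3 0 (-1) 0 := by
  rw [evV_mk]
  try rw [vec3_smul]
  exact vec3_congr (by first | (simp only [gr, gs]; push_cast; ring) | (push_cast; ring) | norm_num) (by first | (simp only [gr, gs]; push_cast; ring) | (push_cast; ring) | norm_num) (by first | (simp only [gr, gs]; push_cast; ring) | (push_cast; ring) | norm_num)

lemma Evc5 : evV (⟨0,0⟩,⟨0,0⟩,⟨-4,0⟩) = vec3 0 0 (-1) := by
  rw [evV_mk]
  try rw [vec3_smul]
  exact vec3_congr (by first | (simp only [gr, gs]; push_cast; ring) | (push_cast; ring) | norm_num) (by first | (simp only [gr, gs]; push_cast; ring) | (push_cast; ring) | norm_num) (by first | (simp only [gr, gs]; push_cast; ring) | (push_cast; ring) | norm_num)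

lemma Evc6 : evV (⟨1,1⟩,⟨2,0⟩,⟨1,-1⟩) = (2:ℝ)⁻¹ • vec3 (1 * gr) 1 (1 * gs) := by
  rw [evV_mk]
  try rw [vec3_smul]
  exact vec3_congr (by first | (simp only [gr, gs]; push_cast; ring) | (push_cast; ring) | norm_num) (by first | (simp only [gr, gs]; push_cast; ring) | (push_cast; ring) | norm_num) (by first | (simp only [gr, gs]; push_cast; ring) | (push_cast; ring) | norm_num)

lemma Evc7 : evV (⟨1,-1⟩,⟨1,1⟩,⟨2,0⟩) = (2:ℝ)⁻¹ • vec3 (1 * gs) (1 * gr) 1 := by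
  rw [evV_mk]
  try rw [vec3_smul]
  exact vec3_congr (by first | (simp only [gr, gs]; push_cast; ring) | (push_cast; ring) | norm_num) (by first | (simp only [gr, gs]; push_cast; ring) | (push_cast; ring) | norm_num) (by first | (simp only [gr, gs]; push_cast; ring) | (push_cast; ring) | norm_num)

lemma Evc8 : evV (⟨2,0⟩,⟨1,-1⟩,⟨1,1⟩) = (2:ℝ)⁻¹ • vec3 1 (1 * gs) (1 * gr) := by
  rw [evV_mk]
  try rw [vec3_smul]
  exact vec3_congr (by first | (simp only [gr, gs]; push_cast; ring) | (push_cast; ring) | norm_num) (by first | (simp only [gr, gs]; push_cast; ring) | (push_cast; ring) | norm_num) (by first | (simp only [gr, gs]; push_cast; ring) | (push_cast; ring) | norm_num)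

lemma Evc9 : evV (⟨1,1⟩,⟨2,0⟩,⟨-1,1⟩) = (2:ℝ)⁻¹ • vec3 (1 * gr) 1 ((-1) * gs) := by
  rw [evV_mk]
  try rw [vec3_smul]
  exact vec3_congr (by first | (simp only [gr, gs]; push_cast; ring) | (push_cast; ring) | norm_num) (by first | (simp only [gr, gs]; push_cast; ring) | (push_cast; ring) | norm_num) (by first | (simp only [gr, gs]; push_cast; ring) | (push_cast; ring) | norm_num)

lemma Evc10 : evV (⟨-1,1⟩,⟨1,1⟩,⟨2,0⟩) = (2:ℝ)⁻¹ • vec3 ((-1) * gs) (1 * gr) 1 := by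
  rw [evV_mk]
  try rw [vec3_smul]
  exact vec3_congr (by first | (simp only [gr, gs]; push_cast; ring) | (push_cast; ring) | norm_num) (by first | (simp only [gr, gs]; push_cast; ring) | (push_cast; ring) | norm_num) (by first | (simp only [gr, gs]; push_cast; ring) | (push_cast; ring) | norm_num)

lemma Evc11 : evV (⟨2,0⟩,⟨-1,1⟩,⟨1,1⟩) = (2:ℝ)⁻¹ • vec3 1 ((-1) * gs) (1 * gr) := by
  rw [evV_mk]
  try rw [vec3_smul]
  exact vec3_congr (by first | (simp only [gr, gs]; push_cast; ring) | (push_cast; ring) | norm_num) (by first | (simp only [gr, gs]; push_cast; ring) | (push_cast; ring) | norm_num) (by first | (simp only [gr, gs]; push_cast; ring) | (push_cast; ring) | norm_num)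

lemma Evc12 : evV (⟨1,1⟩,⟨-2,0⟩,⟨1,-1⟩) = (2:ℝ)⁻¹ • vec3 (1 * gr) (-1) (1 * gs) := by
  rw [evV_mk]
  try rw [vec3_smul]
  exact vec3_congr (by first | (simp only [gr, gs]; push_cast; ring) | (push_cast; ring) | norm_num) (by first | (simp only [gr, gs]; push_cast; ring) | (push_cast; ring) | norm_num) (by first | (simp only [gr, gs]; push_cast; ring) | (push_cast; ring) | norm_num)

lemma Evc13 : evV (⟨1,-1⟩,⟨1,1⟩,⟨-2,0⟩) = (2:ℝ)⁻¹ • vec3 (1 * gs) (1 * gr) (-1) := by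
  rw [evV_mk]
  try rw [vec3_smul]
  exact vec3_congr (by first | (simp only [gr, gs]; push_cast; ring) | (push_cast; ring) | norm_num) (by first | (simp only [gr, gs]; push_cast; ring) | (push_cast; ring) | norm_num) (by first | (simp only [gr, gs]; push_cast; ring) | (push_cast; ring) | norm_num)

lemma Evc14 : evV (⟨-2,0⟩,⟨1,-1⟩,⟨1,1⟩) = (2:ℝ)⁻¹ • vec3 (-1) (1 * gs) (1 * gr) := by
  rw [evV_mk]
  try rw [vec3_smul]
  exact vec3_congr (by first | (simp only [gr, gs]; push_cast; ring) | (push_cast; ring) | norm_num) (by first | (simp only [gr, gs]; push_cast; ring) | (push_cast; ring) | norm_num) (by first | (simp only [gr, gs]; push_cast; ring) | (push_cast; ring) | norm_num)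

lemma Evc15 : evV (⟨1,1⟩,⟨-2,0⟩,⟨-1,1⟩) = (2:ℝ)⁻¹ • vec3 (1 * gr) (-1) ((-1) * gs) := by
  rw [evV_mk]
  try rw [vec3_smul]
  exact vec3_congr (by first | (simp only [gr, gs]; push_cast; ring) | (push_cast; ring) | norm_num) (by first | (simp only [gr, gs]; push_cast; ring) | (push_cast; ring) | norm_num) (by first | (simp only [gr, gs]; push_cast; ring) | (push_cast; ring) | norm_num)

lemma Evc16 : evV (⟨-1,1⟩,⟨1,1⟩,⟨-2,0⟩) = (2:ℝ)⁻¹ • vec3 ((-1) * gs) (1 * gr) (-1) := by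
  rw [evV_mk]
  try rw [vec3_smul]
  exact vec3_congr (by first | (simp only [gr, gs]; push_cast; ring) | (push_cast; ring) | norm_num) (by first | (simp only [gr, gs]; push_cast; ring) | (push_cast; ring) | norm_num) (by first | (simp only [gr, gs]; push_cast; ring) | (push_cast; ring) | norm_num)

lemma Evc17 : evV (⟨-2,0⟩,⟨-1,1⟩,⟨1,1⟩) = (2:ℝ)⁻¹ • vec3 (-1) ((-1) * gs) (1 * gr) := by
  rw [evV_mk]
  try rw [vec3_smul]
  exact vec3_congr (by first | (simp only [gr, gs]; push_cast; ring) | (push_cast; ring) | norm_num) (by first | (simp only [gr, gs]; push_cast; ring) | (push_cast; ring) | norm_num) (by first | (simp only [gr, gs]; push_cast; ring) | (push_cast; ring) | norm_num)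

lemma Evc18 : evV (⟨-1,-1⟩,⟨2,0⟩,⟨1,-1⟩) = (2:ℝ)⁻¹ • vec3 ((-1) * gr) 1 (1 * gs) := by
  rw [evV_mk]
  try rw [vec3_smul]
  exact vec3_congr (by first | (simp only [gr, gs]; push_cast; ring) | (push_cast; ring) | norm_num) (by first | (simp only [gr, gs]; push_cast; ring) | (push_cast; ring) | norm_num) (by first | (simp only [gr, gs]; push_cast; ring) | (push_cast; ring) | norm_num)

lemma Evc19 : evV (⟨1,-1⟩,⟨-1,-1⟩,⟨2,0⟩) = (2:ℝ)⁻¹ • vec3 (1 * gs) ((-1) * gr) 1 := by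
  rw [evV_mk]
  try rw [vec3_smul]
  exact vec3_congr (by first | (simp only [gr, gs]; push_cast; ring) | (push_cast; ring) | norm_num) (by first | (simp only [gr, gs]; push_cast; ring) | (push_cast; ring) | norm_num) (by first | (simp only [gr, gs]; push_cast; ring) | (push_cast; ring) | norm_num)

lemma Evc20 : evV (⟨2,0⟩,⟨1,-1⟩,⟨-1,-1⟩) = (2:ℝ)⁻¹ • vec3 1 (1 * gs) ((-1) * gr) := by
  rw [evV_mk]
  try rw [vec3_smul]
  exact vec3_congr (by first | (simp only [gr, gs]; push_cast; ring) | (push_cast; ring) | norm_num) (by first | (simp only [gr, gs]; push_cast; ring) | (push_cast; ring) | norm_num) (by first | (simp only [gr, gs]; push_cast; ring) | (push_cast; ring) | norm_num)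

lemma Evc21 : evV (⟨-1,-1⟩,⟨2,0⟩,⟨-1,1⟩) = (2:ℝ)⁻¹ • vec3 ((-1) * gr) 1 ((-1) * gs) := by
  rw [evV_mk]
  try rw [vec3_smul]
  exact vec3_congr (by first | (simp only [gr, gs]; push_cast; ring) | (push_cast; ring) | norm_num) (by first | (simp only [gr, gs]; push_cast; ring) | (push_cast; ring) | norm_num) (by first | (simp only [gr, gs]; push_cast; ring) | (push_cast; ring) | norm_num)

lemma Evc22 : evV (⟨-1,1⟩,⟨-1,-1⟩,⟨2,0⟩) = (2:ℝ)⁻¹ • vec3 ((-1) * gs) ((-1) * gr) 1 := by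
  rw [evV_mk]
  try rw [vec3_smul]
  exact vec3_congr (by first | (simp only [gr, gs]; push_cast; ring) | (push_cast; ring) | norm_num) (by first | (simp only [gr, gs]; push_cast; ring) | (push_cast; ring) | norm_num) (by first | (simp only [gr, gs]; push_cast; ring) | (push_cast; ring) | norm_num)

lemma Evc23 : evV (⟨2,0⟩,⟨-1,1⟩,⟨-1,-1⟩) = (2:ℝ)⁻¹ • vec3 1 ((-1) * gs) ((-1) * gr) := by
  rw [evV_mk]
  try rw [vec3_smul]
  exact vec3_congr (by first | (simp only [gr, gs]; push_cast; ring) | (push_cast; ring) | norm_num) (by first | (simp only [gr, gs]; push_cast; ring) | (push_cast; ring) | norm_num) (by first | (simp only [gr, gs]; push_cast; ring) | (push_cast; ring) | norm_num)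

lemma Evc24 : evV (⟨-1,-1⟩,⟨-2,0⟩,⟨1,-1⟩) = (2:ℝ)⁻¹ • vec3 ((-1) * gr) (-1) (1 * gs) := by
  rw [evV_mk]
  try rw [vec3_smul]
  exact vec3_congr (by first | (simp only [gr, gs]; push_cast; ring) | (push_cast; ring) | norm_num) (by first | (simp only [gr, gs]; push_cast; ring) | (push_cast; ring) | norm_num) (by first | (simp only [gr, gs]; push_cast; ring) | (push_cast; ring) | norm_num)

lemma Evc25 : evV (⟨1,-1⟩,⟨-1,-1⟩,⟨-2,0⟩) = (2:ℝ)⁻¹ • vec3 (1 * gs) ((-1) * gr) (-1) := by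
  rw [evV_mk]
  try rw [vec3_smul]
  exact vec3_congr (by first | (simp only [gr, gs]; push_cast; ring) | (push_cast; ring) | norm_num) (by first | (simp only [gr, gs]; push_cast; ring) | (push_cast; ring) | norm_num) (by first | (simp only [gr, gs]; push_cast; ring) | (push_cast; ring) | norm_num)

lemma Evc26 : evV (⟨-2,0⟩,⟨1,-1⟩,⟨-1,-1⟩) = (2:ℝ)⁻¹ • vec3 (-1) (1 * gs) ((-1) * gr) := by
  rw [evV_mk]
  try rw [vec3_smul]
  exact vec3_congr (by first | (simp only [gr, gs]; push_cast; ring) | (push_cast; ring) | norm_num) (by first | (simp only [gr, gs]; push_cast; ring) | (push_cast; ring) | norm_num) (by first | (simp only [gr, gs]; push_cast; ring) | (push_cast; ring) | norm_num)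

lemma Evc27 : evV (⟨-1,-1⟩,⟨-2,0⟩,⟨-1,1⟩) = (2:ℝ)⁻¹ • vec3 ((-1) * gr) (-1) ((-1) * gs) := by
  rw [evV_mk]
  try rw [vec3_smul]
  exact vec3_congr (by first | (simp only [gr, gs]; push_cast; ring) | (push_cast; ring) | norm_num) (by first | (simp only [gr, gs]; push_cast; ring) | (push_cast; ring) | norm_num) (by first | (simp only [gr, gs]; push_cast; ring) | (push_cast; ring) | norm_num)

lemma Evc28 : evV (⟨-1,1⟩,⟨-1,-1⟩,⟨-2,0⟩) = (2:ℝ)⁻¹ • vec3 ((-1) * gs) ((-1) * gr) (-1) := by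
  rw [evV_mk]
  try rw [vec3_smul]
  exact vec3_congr (by first | (simp only [gr, gs]; push_cast; ring) | (push_cast; ring) | norm_num) (by first | (simp only [gr, gs]; push_cast; ring) | (push_cast; ring) | norm_num) (by first | (simp only [gr, gs]; push_cast; ring) | (push_cast; ring) | norm_num)

lemma Evc29 : evV (⟨-2,0⟩,⟨-1,1⟩,⟨-1,-1⟩) = (2:ℝ)⁻¹ • vec3 (-1) ((-1) * gs) ((-1) * gr) := by
  rw [evV_mk]
  try rw [vec3_smul]
  exact vec3_congr (by first | (simp only [gr, gs]; push_cast; ring) | (push_cast; ring) | norm_num) (by first | (simp only [gr, gs]; push_cast; ring) | (push_cast; ring) | norm_num) (by first | (simp only [gr, gs]; push_cast; ring) | (push_cast; ring) | norm_num)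

lemma Eg2 : evV (⟨1,1⟩,⟨2,0⟩,⟨1,-1⟩) = (2:ℝ)⁻¹ • vec3 gr 1 gs := by
  rw [evV_mk, vec3_smul]
  exact vec3_congr (by simp only [gr]; push_cast; ring) (by push_cast; ring)
    (by simp only [gs]; push_cast; ring)

lemma hIcoEq : Icosid = {x | ∃ v ∈ L30, evV v = x} := by
  apply Set.Subset.antisymm
  · rintro x (⟨a, (rfl|rfl), (rfl|rfl|rfl)⟩ | ⟨a, b, c, (rfl|rfl), (rfl|rfl), (rfl|rfl), (rfl|rfl|rfl)⟩)

    · exact ⟨_, by decide, Evc0⟩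
    · exact ⟨_, by decide, Evc1⟩
    · exact ⟨_, by decide, Evc2⟩
    · exact ⟨_, by decide, Evc3⟩
    · exact ⟨_, by decide, Evc4⟩
    · exact ⟨_, by decide, Evc5⟩
    · exact ⟨_, by decide, Evc6⟩
    · exact ⟨_, by decide, Evc7⟩
    · exact ⟨_, by decide, Evc8⟩
    · exact ⟨_, by decide, Evc9⟩
    · exact ⟨_, by decide, Evc10⟩
    · exact ⟨_, by decide, Evc11⟩
    · exact ⟨_, by decide, Evc12⟩
    · exact ⟨_, by decide, Evc13⟩
    · exact ⟨_, by decide, Evc14⟩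
    · exact ⟨_, by decide, Evc15⟩
    · exact ⟨_, by decide, Evc16⟩
    · exact ⟨_, by decide, Evc17⟩
    · exact ⟨_, by decide, Evc18⟩
    · exact ⟨_, by decide, Evc19⟩
    · exact ⟨_, by decide, Evc20⟩
    · exact ⟨_, by decide, Evc21⟩
    · exact ⟨_, by decide, Evc22⟩
    · exact ⟨_, by decide, Evc23⟩
    · exact ⟨_, by decide, Evc24⟩
    · exact ⟨_, by decide, Evc25⟩
    · exact ⟨_, by decide, Evc26⟩
    · exact ⟨_, by decide, Evc27⟩
    · exact ⟨_, by decide, Evc28⟩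
    · exact ⟨_, by decide, Evc29⟩
  · rintro x ⟨v, hv, rfl⟩
    fin_cases hv
    · exact Or.inl ⟨1, Or.inl rfl, Or.inl Evc0⟩
    · exact Or.inl ⟨1, Or.inl rfl, Or.inr (Or.inl Evc1)⟩
    · exact Or.inl ⟨1, Or.inl rfl, Or.inr (Or.inr Evc2)⟩
    · exact Or.inl ⟨(-1), Or.inr rfl, Or.inl Evc3⟩
    · exact Or.inl ⟨(-1), Or.inr rfl, Or.inr (Or.inl Evc4)⟩
    · exact Or.inl ⟨(-1), Or.inr rfl, Or.inr (Or.inr Evc5)⟩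
    · exact Or.inr ⟨1, 1, 1, Or.inl rfl, Or.inl rfl, Or.inl rfl, Or.inl Evc6⟩
    · exact Or.inr ⟨1, 1, 1, Or.inl rfl, Or.inl rfl, Or.inl rfl, Or.inr (Or.inl Evc7)⟩
    · exact Or.inr ⟨1, 1, 1, Or.inl rfl, Or.inl rfl, Or.inl rfl, Or.inr (Or.inr Evc8)⟩
    · exact Or.inr ⟨1, 1, (-1), Or.inl rfl, Or.inl rfl, Or.inr rfl, Or.inl Evc9⟩
    · exact Or.inr ⟨1, 1, (-1), Or.inl rfl, Or.inl rfl, Or.inr rfl, Or.inr (Or.inl Evc10)⟩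
    · exact Or.inr ⟨1, 1, (-1), Or.inl rfl, Or.inl rfl, Or.inr rfl, Or.inr (Or.inr Evc11)⟩
    · exact Or.inr ⟨1, (-1), 1, Or.inl rfl, Or.inr rfl, Or.inl rfl, Or.inl Evc12⟩
    · exact Or.inr ⟨1, (-1), 1, Or.inl rfl, Or.inr rfl, Or.inl rfl, Or.inr (Or.inl Evc13)⟩
    · exact Or.inr ⟨1, (-1), 1, Or.inl rfl, Or.inr rfl, Or.inl rfl, Or.inr (Or.inr Evc14)⟩
    · exact Or.inr ⟨1, (-1), (-1), Or.inl rfl, Or.inr rfl, Or.inr rfl, Or.inl Evc15⟩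
    · exact Or.inr ⟨1, (-1), (-1), Or.inl rfl, Or.inr rfl, Or.inr rfl, Or.inr (Or.inl Evc16)⟩
    · exact Or.inr ⟨1, (-1), (-1), Or.inl rfl, Or.inr rfl, Or.inr rfl, Or.inr (Or.inr Evc17)⟩
    · exact Or.inr ⟨(-1), 1, 1, Or.inr rfl, Or.inl rfl, Or.inl rfl, Or.inl Evc18⟩
    · exact Or.inr ⟨(-1), 1, 1, Or.inr rfl, Or.inl rfl, Or.inl rfl, Or.inr (Or.inl Evc19)⟩
    · exact Or.inr ⟨(-1), 1, 1, Or.inr rfl, Or.inl rfl, Or.inl rfl, Or.inr (Or.inr Evc20)⟩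
    · exact Or.inr ⟨(-1), 1, (-1), Or.inr rfl, Or.inl rfl, Or.inr rfl, Or.inl Evc21⟩
    · exact Or.inr ⟨(-1), 1, (-1), Or.inr rfl, Or.inl rfl, Or.inr rfl, Or.inr (Or.inl Evc22)⟩
    · exact Or.inr ⟨(-1), 1, (-1), Or.inr rfl, Or.inl rfl, Or.inr rfl, Or.inr (Or.inr Evc23)⟩
    · exact Or.inr ⟨(-1), (-1), 1, Or.inr rfl, Or.inr rfl, Or.inl rfl, Or.inl Evc24⟩
    · exact Or.inr ⟨(-1), (-1), 1, Or.inr rfl, Or.inr rfl, Or.inl rfl, Or.inr (Or.inl Evc25)⟩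
    · exact Or.inr ⟨(-1), (-1), 1, Or.inr rfl, Or.inr rfl, Or.inl rfl, Or.inr (Or.inr Evc26)⟩
    · exact Or.inr ⟨(-1), (-1), (-1), Or.inr rfl, Or.inr rfl, Or.inr rfl, Or.inl Evc27⟩
    · exact Or.inr ⟨(-1), (-1), (-1), Or.inr rfl, Or.inr rfl, Or.inr rfl, Or.inr (Or.inl Evc28)⟩
    · exact Or.inr ⟨(-1), (-1), (-1), Or.inr rfl, Or.inr rfl, Or.inr rfl, Or.inr (Or.inr Evc29)⟩

lemma Ico_norm : ∀ α ∈ Icosid, ⟪α,α⟫ = 1 := by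
  intro α hα
  rw [hIcoEq] at hα
  obtain ⟨v, hv, rfl⟩ := hα
  exact inner_evV_self (hnorm v hv)

lemma Ico_closed : ∀ α ∈ Icosid, ∀ x ∈ Icosid, sRefl α x ∈ Icosid := by
  intro α hα x hx
  rw [hIcoEq] at hα hx ⊢
  obtain ⟨A, hA, rfl⟩ := hα
  obtain ⟨X, hX, rfl⟩ := hx
  obtain ⟨Y, hY, hE⟩ := hcl A hA X hX
  exact ⟨Y, hY, (sRefl_evV (hnorm A hA) hE).symm⟩

def SimpleSet3 : Set E3 := {vec3 (-1) 0 0, (2:ℝ)⁻¹ • vec3 gr 1 gs, vec3 0 0 (-1)}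

lemma SS_Ico : SimpleSet3 ⊆ Icosid := by
  intro r hr
  rw [hIcoEq]
  rcases hr with rfl | rfl | rfl
  · exact ⟨_, by decide, Evc3⟩
  · exact ⟨_, by decide, Eg2⟩
  · exact ⟨_, by decide, Evc5⟩

lemma SSnorm : ∀ α ∈ SimpleSet3, ⟪α,α⟫ = 1 := fun α hα => Ico_norm α (SS_Ico hα)

lemma SS_sub_orbit : ∀ r ∈ SimpleSet3, r ∈ orbitOf SimpleSet3 :=
  fun r hr => ⟨1, one_mem _, r, hr, rfl⟩

lemma orbit_step : ∀ α ∈ SimpleSet3, ∀ x ∈ orbitOf SimpleSet3, sRefl α x ∈ orbitOf SimpleSet3 := by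
  rintro α hα x ⟨g, hg, r, hr, rfl⟩
  refine ⟨rIso α * g, mul_mem (Subgroup.subset_closure ⟨α, hα, rIso_apply α (SSnorm α hα)⟩) hg,
    r, hr, ?_⟩
  rw [LinearIsometryEquiv.coe_mul, Function.comp_apply, rIso_apply α (SSnorm α hα)]

lemma step1 {X Y : V3} (h : reflz (⟨-4,0⟩,⟨0,0⟩,⟨0,0⟩) X = m8 Y)
    (hX : evV X ∈ orbitOf SimpleSet3) : evV Y ∈ orbitOf SimpleSet3 := by
  have h2 := orbit_step (vec3 (-1) 0 0) (Set.mem_insert _ _) _ hX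
  rwa [← Evc3, sRefl_evV (by decide) h] at h2

lemma step2 {X Y : V3} (h : reflz (⟨1,1⟩,⟨2,0⟩,⟨1,-1⟩) X = m8 Y)
    (hX : evV X ∈ orbitOf SimpleSet3) : evV Y ∈ orbitOf SimpleSet3 := by
  have h2 := orbit_step ((2:ℝ)⁻¹ • vec3 gr 1 gs)
    (Set.mem_insert_of_mem _ (Set.mem_insert _ _)) _ hX
  rwa [← Eg2, sRefl_evV (by decide) h] at h2

lemma step3 {X Y : V3} (h : reflz (⟨0,0⟩,⟨0,0⟩,⟨-4,0⟩) X = m8 Y)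
    (hX : evV X ∈ orbitOf SimpleSet3) : evV Y ∈ orbitOf SimpleSet3 := by
  have h2 := orbit_step (vec3 0 0 (-1))
    (Set.mem_insert_of_mem _ (Set.mem_insert_of_mem _ rfl)) _ hX
  rwa [← Evc5, sRefl_evV (by decide) h] at h2

lemma hOrbitSup : ∀ v ∈ L30, evV v ∈ orbitOf SimpleSet3 := by
  have c3 : evV (⟨-4,0⟩,⟨0,0⟩,⟨0,0⟩) ∈ orbitOf SimpleSet3 := by
    rw [Evc3]; exact SS_sub_orbit _ (Set.mem_insert _ _)
  have c6 : evV (⟨1,1⟩,⟨2,0⟩,⟨1,-1⟩) ∈ orbitOf SimpleSet3 := by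
    rw [Eg2]; exact SS_sub_orbit _ (Set.mem_insert_of_mem _ (Set.mem_insert _ _))
  have c5 : evV (⟨0,0⟩,⟨0,0⟩,⟨-4,0⟩) ∈ orbitOf SimpleSet3 := by
    rw [Evc5]; exact SS_sub_orbit _ (Set.mem_insert_of_mem _ (Set.mem_insert_of_mem _ rfl))
  have c0 : evV (⟨4,0⟩,⟨0,0⟩,⟨0,0⟩) ∈ orbitOf SimpleSet3 := step1 (by decide) c3
  have c16 : evV (⟨-1,1⟩,⟨1,1⟩,⟨-2,0⟩) ∈ orbitOf SimpleSet3 := step2 (by decide) c3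
  have c18 : evV (⟨-1,-1⟩,⟨2,0⟩,⟨1,-1⟩) ∈ orbitOf SimpleSet3 := step1 (by decide) c6
  have c27 : evV (⟨-1,-1⟩,⟨-2,0⟩,⟨-1,1⟩) ∈ orbitOf SimpleSet3 := step2 (by decide) c6
  have c9 : evV (⟨1,1⟩,⟨2,0⟩,⟨-1,1⟩) ∈ orbitOf SimpleSet3 := step3 (by decide) c6
  have c26 : evV (⟨-2,0⟩,⟨1,-1⟩,⟨-1,-1⟩) ∈ orbitOf SimpleSet3 := step2 (by decide) c5
  have c2 : evV (⟨0,0⟩,⟨0,0⟩,⟨4,0⟩) ∈ orbitOf SimpleSet3 := step3 (by decide) c5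
  have c19 : evV (⟨1,-1⟩,⟨-1,-1⟩,⟨2,0⟩) ∈ orbitOf SimpleSet3 := step2 (by decide) c0
  have c13 : evV (⟨1,-1⟩,⟨1,1⟩,⟨-2,0⟩) ∈ orbitOf SimpleSet3 := step1 (by decide) c16
  have c10 : evV (⟨-1,1⟩,⟨1,1⟩,⟨2,0⟩) ∈ orbitOf SimpleSet3 := step3 (by decide) c16
  have c21 : evV (⟨-1,-1⟩,⟨2,0⟩,⟨-1,1⟩) ∈ orbitOf SimpleSet3 := step3 (by decide) c18
  have c15 : evV (⟨1,1⟩,⟨-2,0⟩,⟨-1,1⟩) ∈ orbitOf SimpleSet3 := step1 (by decide) c27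
  have c24 : evV (⟨-1,-1⟩,⟨-2,0⟩,⟨1,-1⟩) ∈ orbitOf SimpleSet3 := step3 (by decide) c27
  have c14 : evV (⟨-2,0⟩,⟨1,-1⟩,⟨1,1⟩) ∈ orbitOf SimpleSet3 := step2 (by decide) c9
  have c20 : evV (⟨2,0⟩,⟨1,-1⟩,⟨-1,-1⟩) ∈ orbitOf SimpleSet3 := step1 (by decide) c26
  have c11 : evV (⟨2,0⟩,⟨-1,1⟩,⟨1,1⟩) ∈ orbitOf SimpleSet3 := step2 (by decide) c2
  have c22 : evV (⟨-1,1⟩,⟨-1,-1⟩,⟨2,0⟩) ∈ orbitOf SimpleSet3 := step1 (by decide) c19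
  have c25 : evV (⟨1,-1⟩,⟨-1,-1⟩,⟨-2,0⟩) ∈ orbitOf SimpleSet3 := step3 (by decide) c19
  have c7 : evV (⟨1,-1⟩,⟨1,1⟩,⟨2,0⟩) ∈ orbitOf SimpleSet3 := step3 (by decide) c13
  have c17 : evV (⟨-2,0⟩,⟨-1,1⟩,⟨1,1⟩) ∈ orbitOf SimpleSet3 := step2 (by decide) c10
  have c1 : evV (⟨0,0⟩,⟨4,0⟩,⟨0,0⟩) ∈ orbitOf SimpleSet3 := step2 (by decide) c21
  have c12 : evV (⟨1,1⟩,⟨-2,0⟩,⟨1,-1⟩) ∈ orbitOf SimpleSet3 := step3 (by decide) c15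
  have c23 : evV (⟨2,0⟩,⟨-1,1⟩,⟨-1,-1⟩) ∈ orbitOf SimpleSet3 := step2 (by decide) c24
  have c8 : evV (⟨2,0⟩,⟨1,-1⟩,⟨1,1⟩) ∈ orbitOf SimpleSet3 := step1 (by decide) c14
  have c28 : evV (⟨-1,1⟩,⟨-1,-1⟩,⟨-2,0⟩) ∈ orbitOf SimpleSet3 := step3 (by decide) c22
  have c29 : evV (⟨-2,0⟩,⟨-1,1⟩,⟨-1,-1⟩) ∈ orbitOf SimpleSet3 := step3 (by decide) c17
  have c4 : evV (⟨0,0⟩,⟨-4,0⟩,⟨0,0⟩) ∈ orbitOf SimpleSet3 := step2 (by decide) c12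
  intro v hv
  fin_cases hv <;> assumption

lemma orbit_sub : orbitOf SimpleSet3 ⊆ Icosid := by
  rintro x ⟨g, hg, r, hr, rfl⟩
  have key : ∀ g' ∈ reflGroup SimpleSet3,
      (∀ y ∈ Icosid, g' y ∈ Icosid) ∧ (∀ y ∈ Icosid, g'⁻¹ y ∈ Icosid) := by
    intro g' hg'
    induction hg' using Subgroup.closure_induction with
    | mem g'' hmem =>
      obtain ⟨α, hα, hgα⟩ := hmem
      have hαI := SS_Ico hα
      have hfwd : ∀ y ∈ Icosid, g'' y ∈ Icosid := fun y hy => by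
        rw [hgα]; exact Ico_closed α hαI y hy
      refine ⟨hfwd, fun y hy => ?_⟩
      have hinv : ∀ z, g'' (g'' z) = z := fun z => by
        rw [hgα, hgα]; exact sRefl_invol α (Ico_norm α hαI) z
      have heq : g''⁻¹ y = g'' y := by
        conv_lhs => rw [← hinv y]
        rw [LinearIsometryEquiv.coe_inv, LinearIsometryEquiv.symm_apply_apply]
      rw [heq]; exact hfwd y hy
    | one => exact ⟨fun y hy => by simpa using hy, fun y hy => by simpa using hy⟩
    | mul a b _ _ ha hb =>
      refine ⟨fun y hy => ?_, fun y hy => ?_⟩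
      · rw [LinearIsometryEquiv.coe_mul, Function.comp_apply]
        exact ha.1 _ (hb.1 y hy)
      · rw [mul_inv_rev, LinearIsometryEquiv.coe_mul, Function.comp_apply]
        exact hb.2 _ (ha.2 y hy)
    | inv a _ ha =>
      refine ⟨ha.2, fun y hy => ?_⟩
      rw [inv_inv]
      exact ha.1 y hy
  exact (key g hg).1 r (SS_Ico hr)


/-- The orbit of the simple roots `(−1,0,0), ½(τ,1,σ), (0,0,−1)` of `H₃` under the group of
linear isometries generated by the three corresponding reflections is exactly the
icosidodecahedron (the octahedron together with all cyclic permutations of `½(±τ,±1,±σ)`),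
and this set is invariant under all of its own reflections. -/
theorem H3_rootSystem :
    orbitOf {vec3 (-1) 0 0, (2:ℝ)⁻¹ • vec3 gr 1 gs, vec3 0 0 (-1)} = Icosid ∧
      ∀ α ∈ Icosid, ∀ x ∈ Icosid, sRefl α x ∈ Icosid := by

  constructor
  · refine Set.Subset.antisymm orbit_sub ?_
    intro y hy
    rw [hIcoEq] at hy
    obtain ⟨v, hv, rfl⟩ := hy
    exact hOrbitSup v hv
  · exact Ico_closed
end
end

section
/- Let Φ be the 6-element set {(±1,0,0), (0,±1,0), (0,0,±1)} ⊂ ℝ³ (the root system of A₁×A₁×A₁). Then the set of quaternion products {ι(p) · ι(q) : p, q ∈ Φ} is exactly the 8-element set of Lipschitz units {±1, ±i, ±j, ±k}; that is, the spinors generated by the A₁×A₁×A₁ Coxeter reflections realise the quaternion group, the root system of A₁×A₁×A₁×A₁. -/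
noncomputable section

open scoped RealInnerProductSpace

lemma pm_mul {a b : ℝ} (ha : pm a) (hb : pm b) : pm (a * b) := by
  rcases ha with rfl | rfl <;> rcases hb with rfl | rfl <;> simp [pm]

lemma pm_neg {a : ℝ} (ha : pm a) : pm (-a) := by
  rcases ha with rfl | rfl <;> simp [pm]

/-- The products of pairs of pure quaternions corresponding to roots of `A₁ × A₁ × A₁`
(the octahedron) are exactly the 8 Lipschitz units: the spinors generated by the
`A₁ × A₁ × A₁` Coxeter reflections realise the quaternion group, the root system of
`A₁ × A₁ × A₁ × A₁`. -/
theorem A1xA1xA1_induces_A1fourth :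
    {z : Quaternion ℝ | ∃ p ∈ Oct, ∃ q ∈ Oct, z = iota p * iota q} = Lip := by
  ext z
  simp only [Set.mem_setOf_eq, Oct, Lip]
  constructor
  · rintro ⟨p, ⟨a, ha, rfl | rfl | rfl⟩, q, ⟨b, hb, rfl | rfl | rfl⟩, rfl⟩ <;>
    [ (exact ⟨-(a*b), pm_neg (pm_mul ha hb), Or.inl (by
        ext <;> simp only [Quaternion.re_mul, Quaternion.imI_mul, Quaternion.imJ_mul, Quaternion.imK_mul] <;>
          simp [iota, vec3, qmk, Quaternion.re_mul, Quaternion.imI_mul,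
          Quaternion.imJ_mul, Quaternion.imK_mul] <;> ring)⟩);
      (exact ⟨a*b, pm_mul ha hb, Or.inr (Or.inr (Or.inr (by
        ext <;> simp only [Quaternion.re_mul, Quaternion.imI_mul, Quaternion.imJ_mul, Quaternion.imK_mul] <;>
          simp [iota, vec3, qmk, Quaternion.re_mul, Quaternion.imI_mul,
          Quaternion.imJ_mul, Quaternion.imK_mul] <;> ring)))⟩);
      (exact ⟨-(a*b), pm_neg (pm_mul ha hb), Or.inr (Or.inr (Or.inl (by
        ext <;> simp only [Quaternion.re_mul, Quaternion.imI_mul, Quaternion.imJ_mul, Quaternion.imK_mul] <;>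
          simp [iota, vec3, qmk, Quaternion.re_mul, Quaternion.imI_mul,
          Quaternion.imJ_mul, Quaternion.imK_mul] <;> ring)))⟩);
      (exact ⟨-(a*b), pm_neg (pm_mul ha hb), Or.inr (Or.inr (Or.inr (by
        ext <;> simp only [Quaternion.re_mul, Quaternion.imI_mul, Quaternion.imJ_mul, Quaternion.imK_mul] <;>
          simp [iota, vec3, qmk, Quaternion.re_mul, Quaternion.imI_mul,
          Quaternion.imJ_mul, Quaternion.imK_mul] <;> ring)))⟩);
      (exact ⟨-(a*b), pm_neg (pm_mul ha hb), Or.inl (by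
        ext <;> simp only [Quaternion.re_mul, Quaternion.imI_mul, Quaternion.imJ_mul, Quaternion.imK_mul] <;>
          simp [iota, vec3, qmk, Quaternion.re_mul, Quaternion.imI_mul,
          Quaternion.imJ_mul, Quaternion.imK_mul] <;> ring)⟩);
      (exact ⟨a*b, pm_mul ha hb, Or.inr (Or.inl (by
        ext <;> simp only [Quaternion.re_mul, Quaternion.imI_mul, Quaternion.imJ_mul, Quaternion.imK_mul] <;>
          simp [iota, vec3, qmk, Quaternion.re_mul, Quaternion.imI_mul,
          Quaternion.imJ_mul, Quaternion.imK_mul] <;> ring))⟩);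
      (exact ⟨a*b, pm_mul ha hb, Or.inr (Or.inr (Or.inl (by
        ext <;> simp only [Quaternion.re_mul, Quaternion.imI_mul, Quaternion.imJ_mul, Quaternion.imK_mul] <;>
          simp [iota, vec3, qmk, Quaternion.re_mul, Quaternion.imI_mul,
          Quaternion.imJ_mul, Quaternion.imK_mul] <;> ring)))⟩);
      (exact ⟨-(a*b), pm_neg (pm_mul ha hb), Or.inr (Or.inl (by
        ext <;> simp only [Quaternion.re_mul, Quaternion.imI_mul, Quaternion.imJ_mul, Quaternion.imK_mul] <;>
          simp [iota, vec3, qmk, Quaternion.re_mul, Quaternion.imI_mul,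
          Quaternion.imJ_mul, Quaternion.imK_mul] <;> ring))⟩);
      (exact ⟨-(a*b), pm_neg (pm_mul ha hb), Or.inl (by
        ext <;> simp only [Quaternion.re_mul, Quaternion.imI_mul, Quaternion.imJ_mul, Quaternion.imK_mul] <;>
          simp [iota, vec3, qmk, Quaternion.re_mul, Quaternion.imI_mul,
          Quaternion.imJ_mul, Quaternion.imK_mul] <;> ring)⟩) ]
  · rintro ⟨a, ha, rfl | rfl | rfl | rfl⟩
    · exact ⟨vec3 1 0 0, ⟨1, Or.inl rfl, Or.inl rfl⟩, vec3 (-a) 0 0,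
        ⟨-a, pm_neg ha, Or.inl rfl⟩, by
        ext <;> simp only [Quaternion.re_mul, Quaternion.imI_mul, Quaternion.imJ_mul, Quaternion.imK_mul] <;>
          simp [iota, vec3, qmk, Quaternion.re_mul, Quaternion.imI_mul,
          Quaternion.imJ_mul, Quaternion.imK_mul]⟩
    · exact ⟨vec3 0 1 0, ⟨1, Or.inl rfl, Or.inr (Or.inl rfl)⟩, vec3 0 0 a,
        ⟨a, ha, Or.inr (Or.inr rfl)⟩, by
        ext <;> simp only [Quaternion.re_mul, Quaternion.imI_mul, Quaternion.imJ_mul, Quaternion.imK_mul] <;>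
          simp [iota, vec3, qmk, Quaternion.re_mul, Quaternion.imI_mul,
          Quaternion.imJ_mul, Quaternion.imK_mul]⟩
    · exact ⟨vec3 0 0 1, ⟨1, Or.inl rfl, Or.inr (Or.inr rfl)⟩, vec3 a 0 0,
        ⟨a, ha, Or.inl rfl⟩, by
        ext <;> simp only [Quaternion.re_mul, Quaternion.imI_mul, Quaternion.imJ_mul, Quaternion.imK_mul] <;>
          simp [iota, vec3, qmk, Quaternion.re_mul, Quaternion.imI_mul,
          Quaternion.imJ_mul, Quaternion.imK_mul]⟩
    · exact ⟨vec3 1 0 0, ⟨1, Or.inl rfl, Or.inl rfl⟩, vec3 0 a 0,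
        ⟨a, ha, Or.inr (Or.inl rfl)⟩, by
        ext <;> simp only [Quaternion.re_mul, Quaternion.imI_mul, Quaternion.imJ_mul, Quaternion.imK_mul] <;>
          simp [iota, vec3, qmk, Quaternion.re_mul, Quaternion.imI_mul,
          Quaternion.imJ_mul, Quaternion.imK_mul]⟩
end
end

section
/- The purely imaginary icosians (those with zero real part) are exactly the 30 pure quaternions ι(α) where α ranges over the H₃ root system, i.e. over the vectors (±1,0,0), (0,±1,0), (0,0,±1) and all cyclic permutations of the coordinates of ½(±τ,±1,±σ); thus the rank-3 root system of H₃ is realised inside the binary icosahedral group as its pure quaternion elements. -/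
noncomputable section

open scoped RealInnerProductSpace

-- auxiliary
lemma pm_ne {a : ℝ} (ha : pm a) : a ≠ 0 := by rcases ha with rfl | rfl <;> norm_num
lemma gr_ne : gr ≠ 0 := by
  have : (0:ℝ) ≤ Real.sqrt 5 := Real.sqrt_nonneg 5
  unfold gr; positivity
lemma gs_ne : gs ≠ 0 := by
  have h : (1:ℝ) < Real.sqrt 5 := by
    rw [show (1:ℝ) = Real.sqrt 1 by simp]
    exact Real.sqrt_lt_sqrt (by norm_num) (by norm_num)
  unfold gs
  intro hc
  nlinarith
def P1 : Equiv.Perm (Fin 4) := ⟨![0,2,3,1], ![0,3,1,2], by decide, by decide⟩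
def P2 : Equiv.Perm (Fin 4) := ⟨![0,3,1,2], ![0,2,3,1], by decide, by decide⟩
lemma P1mem : P1 ∈ alternatingGroup (Fin 4) := by rw [Equiv.Perm.mem_alternatingGroup]; decide
lemma P2mem : P2 ∈ alternatingGroup (Fin 4) := by rw [Equiv.Perm.mem_alternatingGroup]; decide
lemma perm_classify (p : Equiv.Perm (Fin 4)) (h : p ∈ alternatingGroup (Fin 4)) (h0 : p 0 = 0) :
    p = 1 ∨ p = P1 ∨ p = P2 := by
  rw [Equiv.Perm.mem_alternatingGroup] at h
  revert h h0; revert p; decide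


/-- The purely imaginary icosians are exactly the images under `ι` of the 30 roots of
`H₃` (the icosidodecahedron): the rank-3 root system of `H₃` is realised inside the binary
icosahedral group as its pure quaternion elements. -/
theorem pure_icosians_eq_H3_roots :
    {x ∈ Icosians | x.re = 0} = iota '' Icosid := by
  ext x
  simp only [Set.mem_setOf_eq, Set.mem_image]
  constructor
  · rintro ⟨hx, hre⟩
    rcases hx with (⟨a, ha, (rfl | rfl | rfl | rfl)⟩ | ⟨a, b, c, d, ha, hb, hc, hd, rfl⟩) |
      ⟨p, hp, a, b, c, ha, hb, hc, h⟩
    · exact absurd hre (pm_ne ha)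
    · exact ⟨vec3 a 0 0, Or.inl ⟨a, ha, Or.inl rfl⟩, by ext <;> simp [iota, vec3, qmk]⟩
    · exact ⟨vec3 0 a 0, Or.inl ⟨a, ha, Or.inr (Or.inl rfl)⟩, by ext <;> simp [iota, vec3, qmk]⟩
    · exact ⟨vec3 0 0 a, Or.inl ⟨a, ha, Or.inr (Or.inr rfl)⟩, by ext <;> simp [iota, vec3, qmk]⟩
    · exact absurd hre (by simpa [qmk] using div_ne_zero (pm_ne ha) (two_ne_zero))
    · have hp0 : p 0 = 0 := by
        have h0 := h 0
        simp only [qcoords, Matrix.cons_val_zero, hre] at h0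
        have hz : ![0, a * gr, b, c * gs] (p 0) = 0 := by linarith
        have key : ∀ j : Fin 4, ![0, a * gr, b, c * gs] j ≠ 0 ∨ j = 0 := by
          intro j; fin_cases j
          · exact Or.inr rfl
          · exact Or.inl (by simpa using mul_ne_zero (pm_ne ha) gr_ne)
          · exact Or.inl (by simpa using pm_ne hb)
          · exact Or.inl (by simpa using mul_ne_zero (pm_ne hc) gs_ne)
        exact (key (p 0)).resolve_left fun hn => hn hz
      have h1 := h 1; have h2 := h 2; have h3 := h 3
      rcases perm_classify p hp hp0 with rfl | rfl | rfl
      · refine ⟨(2:ℝ)⁻¹ • vec3 (a * gr) b (c * gs),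
          Or.inr ⟨a, b, c, ha, hb, hc, Or.inl rfl⟩, ?_⟩
        simp only [qcoords, Equiv.Perm.coe_one, id_eq] at h1 h2 h3
        simp at h1 h2 h3
        ext <;> simp [iota, vec3, qmk, hre, h1, h2, h3] <;> ring
      · refine ⟨(2:ℝ)⁻¹ • vec3 b (c * gs) (a * gr),
          Or.inr ⟨a, b, c, ha, hb, hc, Or.inr (Or.inr rfl)⟩, ?_⟩
        simp only [qcoords, P1, Equiv.coe_fn_mk] at h1 h2 h3
        simp at h1 h2 h3
        ext <;> simp [iota, vec3, qmk, hre, h1, h2, h3] <;> ring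
      · refine ⟨(2:ℝ)⁻¹ • vec3 (c * gs) (a * gr) b,
          Or.inr ⟨a, b, c, ha, hb, hc, Or.inr (Or.inl rfl)⟩, ?_⟩
        simp only [qcoords, P2, Equiv.coe_fn_mk] at h1 h2 h3
        simp at h1 h2 h3
        ext <;> simp [iota, vec3, qmk, hre, h1, h2, h3] <;> ring
  · rintro ⟨v, hv, rfl⟩
    refine ⟨?_, rfl⟩
    rcases hv with ⟨a, ha, (rfl | rfl | rfl)⟩ | ⟨a, b, c, ha, hb, hc, (rfl | rfl | rfl)⟩
    · exact Or.inl (Or.inl ⟨a, ha, Or.inr (Or.inl (by ext <;> simp [iota, vec3, qmk]))⟩)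
    · exact Or.inl (Or.inl ⟨a, ha, Or.inr (Or.inr (Or.inl (by ext <;> simp [iota, vec3, qmk])))⟩)
    · exact Or.inl (Or.inl ⟨a, ha, Or.inr (Or.inr (Or.inr (by ext <;> simp [iota, vec3, qmk])))⟩)
    · refine Or.inr ⟨1, one_mem _, a, b, c, ha, hb, hc, fun i => ?_⟩
      fin_cases i <;> simp [qcoords, iota, vec3, qmk] <;> ring
    · refine Or.inr ⟨P2, P2mem, a, b, c, ha, hb, hc, fun i => ?_⟩
      fin_cases i <;> simp [qcoords, iota, vec3, qmk, P2] <;> ring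
    · refine Or.inr ⟨P1, P1mem, a, b, c, ha, hb, hc, fun i => ?_⟩
      fin_cases i <;> simp [qcoords, iota, vec3, qmk, P1] <;> ring
end
end

section
/- Let τ = (1+√5)/2, σ = (1−√5)/2, and let α₁ = (−1,0,0), α₂ = ½(τ,1,σ), α₃ = (0,0,−1) be the simple roots of H₃ in ℝ³. Then the subgroup of the multiplicative group of the real quaternions generated by the two spinor generators R₁ = ι(α₁)·ι(α₂) and R₂ = ι(α₂)·ι(α₃) is exactly the 120-element set of icosians (the binary icosahedral group, i.e. the root system of H₄). -/
noncomputable section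

open scoped RealInnerProductSpace

@[simp] lemma qmk_re (a b c d : ℝ) : (qmk a b c d).re = a := rfl
@[simp] lemma qmk_imI (a b c d : ℝ) : (qmk a b c d).imI = b := rfl
@[simp] lemma qmk_imJ (a b c d : ℝ) : (qmk a b c d).imJ = c := rfl
@[simp] lemma qmk_imK (a b c d : ℝ) : (qmk a b c d).imK = d := rfl

/-! ### Auxiliary exact arithmetic over ℤ[√5] (coordinates scaled by 4) -/

abbrev Z5 := ℤ × ℤ
def zmul (a b : Z5) : Z5 := (a.1*b.1 + 5*a.2*b.2, a.1*b.2 + a.2*b.1)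
def zadd (a b : Z5) : Z5 := (a.1+b.1, a.2+b.2)
def zneg (a : Z5) : Z5 := (-a.1, -a.2)
def zsub (a b : Z5) : Z5 := zadd a (zneg b)

abbrev Q5 := Z5 × Z5 × Z5 × Z5
def q5mul (x y : Q5) : Q5 :=
  (zsub (zsub (zsub (zmul x.1 y.1) (zmul x.2.1 y.2.1)) (zmul x.2.2.1 y.2.2.1)) (zmul x.2.2.2 y.2.2.2),
   zsub (zadd (zadd (zmul x.1 y.2.1) (zmul x.2.1 y.1)) (zmul x.2.2.1 y.2.2.2)) (zmul x.2.2.2 y.2.2.1),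
   zadd (zadd (zsub (zmul x.1 y.2.2.1) (zmul x.2.1 y.2.2.2)) (zmul x.2.2.1 y.1)) (zmul x.2.2.2 y.2.1),
   zadd (zsub (zadd (zmul x.1 y.2.2.2) (zmul x.2.1 y.2.2.1)) (zmul x.2.2.1 y.2.1)) (zmul x.2.2.2 y.1))
def q5conj (x : Q5) : Q5 := (x.1, zneg x.2.1, zneg x.2.2.1, zneg x.2.2.2)
def q5smul (n : ℤ) (x : Q5) : Q5 :=
  ((n*x.1.1, n*x.1.2), (n*x.2.1.1, n*x.2.1.2), (n*x.2.2.1.1, n*x.2.2.1.2), (n*x.2.2.2.1, n*x.2.2.2.2))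
def one5 : Q5 := ((4,0),(0,0),(0,0),(0,0))

def evg (z : Z5) : ℝ := z.1 + z.2 * Real.sqrt 5
def evRaw (x : Q5) : Quaternion ℝ := qmk (evg x.1) (evg x.2.1) (evg x.2.2.1) (evg x.2.2.2)
def ev (x : Q5) : Quaternion ℝ := (4:ℝ)⁻¹ • evRaw x

lemma sqrt5_mul_self : Real.sqrt 5 * Real.sqrt 5 = 5 := Real.mul_self_sqrt (by norm_num)

lemma evg_mul (a b : Z5) : evg (zmul a b) = evg a * evg b := by
  simp only [evg, zmul]; push_cast
  linear_combination (-(a.2 : ℝ) * b.2) * sqrt5_mul_self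

lemma evg_add (a b : Z5) : evg (zadd a b) = evg a + evg b := by
  simp only [evg, zadd]; push_cast; ring

lemma evg_neg (a : Z5) : evg (zneg a) = - evg a := by
  simp only [evg, zneg]; push_cast; ring

lemma evg_sub (a b : Z5) : evg (zsub a b) = evg a - evg b := by
  simp only [zsub, evg_add, evg_neg]; ring

lemma evRaw_mul (x y : Q5) : evRaw (q5mul x y) = evRaw x * evRaw y := by
  apply Quaternion.ext <;>
    simp only [evRaw, q5mul, qmk_re, qmk_imI, qmk_imJ, qmk_imK, evg_add, evg_sub, evg_mul, Quaternion.re_mul,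
      Quaternion.imI_mul, Quaternion.imJ_mul, Quaternion.imK_mul] <;> ring

lemma evRaw_smul4 (x : Q5) : evRaw (q5smul 4 x) = (4:ℝ) • evRaw x := by
  apply Quaternion.ext <;>
    simp only [evRaw, q5smul, qmk_re, qmk_imI, qmk_imJ, qmk_imK, evg, Quaternion.re_smul, Quaternion.imI_smul,
      Quaternion.imJ_smul, Quaternion.imK_smul, smul_eq_mul] <;> push_cast <;> ring

lemma ev_mul_of {x y z : Q5} (h : q5mul x y = q5smul 4 z) : ev x * ev y = ev z := by
  unfold ev
  rw [smul_mul_smul_comm, ← evRaw_mul, h, evRaw_smul4, smul_smul]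
  norm_num

lemma ev_one : ev one5 = 1 := by
  apply Quaternion.ext <;>
    simp [ev, one5, evRaw, qmk_re, qmk_imI, qmk_imJ, qmk_imK, evg, Quaternion.re_smul, Quaternion.imI_smul,
      Quaternion.imJ_smul, Quaternion.imK_smul, Quaternion.re_one, Quaternion.imI_one,
      Quaternion.imJ_one, Quaternion.imK_one]

/-! ### Signs and parametrized icosian representatives -/

def sg (b : Bool) : ℤ := if b then 1 else -1
def sgR (b : Bool) : ℝ := ((sg b : ℤ) : ℝ)

lemma pm_sgR (b : Bool) : pm (sgR b) := by cases b <;> simp [sgR, sg, pm]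

lemma exists_sg (a : ℝ) (ha : pm a) : ∃ b, sgR b = a := by
  rcases ha with rfl | rfl
  · exact ⟨true, by simp [sgR, sg]⟩
  · exact ⟨false, by simp [sgR, sg]⟩

def vq (ea eb ec : Bool) : Fin 4 → Z5 := ![(0,0), (sg ea, sg ea), (2 * sg eb, 0), (sg ec, - sg ec)]
def Xq (p : Equiv.Perm (Fin 4)) (ea eb ec : Bool) : Q5 :=
  (vq ea eb ec (p 0), vq ea eb ec (p 1), vq ea eb ec (p 2), vq ea eb ec (p 3))
def Xh (e0 e1 e2 e3 : Bool) : Q5 := ((2*sg e0, 0),(2*sg e1,0),(2*sg e2,0),(2*sg e3,0))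
def XL1 (e : Bool) : Q5 := ((4*sg e,0),(0,0),(0,0),(0,0))
def XL2 (e : Bool) : Q5 := ((0,0),(4*sg e,0),(0,0),(0,0))
def XL3 (e : Bool) : Q5 := ((0,0),(0,0),(4*sg e,0),(0,0))
def XL4 (e : Bool) : Q5 := ((0,0),(0,0),(0,0),(4*sg e,0))

def g1q : Q5 := ((1,1),(0,0),(1,-1),(-2,0))
def g2q : Q5 := ((1,-1),(-2,0),(1,1),(0,0))
set_option maxHeartbeats 1000000 in
def S : List Q5 := [
  ((4,0),(0,0),(0,0),(0,0)),
  ((-4,0),(0,0),(0,0),(0,0)),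
  ((0,0),(4,0),(0,0),(0,0)),
  ((0,0),(-4,0),(0,0),(0,0)),
  ((0,0),(0,0),(4,0),(0,0)),
  ((0,0),(0,0),(-4,0),(0,0)),
  ((0,0),(0,0),(0,0),(4,0)),
  ((0,0),(0,0),(0,0),(-4,0)),
  ((2,0),(2,0),(2,0),(2,0)),
  ((2,0),(2,0),(2,0),(-2,0)),
  ((2,0),(2,0),(-2,0),(2,0)),
  ((2,0),(2,0),(-2,0),(-2,0)),
  ((2,0),(-2,0),(2,0),(2,0)),
  ((2,0),(-2,0),(2,0),(-2,0)),
  ((2,0),(-2,0),(-2,0),(2,0)),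
  ((2,0),(-2,0),(-2,0),(-2,0)),
  ((-2,0),(2,0),(2,0),(2,0)),
  ((-2,0),(2,0),(2,0),(-2,0)),
  ((-2,0),(2,0),(-2,0),(2,0)),
  ((-2,0),(2,0),(-2,0),(-2,0)),
  ((-2,0),(-2,0),(2,0),(2,0)),
  ((-2,0),(-2,0),(2,0),(-2,0)),
  ((-2,0),(-2,0),(-2,0),(2,0)),
  ((-2,0),(-2,0),(-2,0),(-2,0)),
  ((0,0),(1,1),(2,0),(1,-1)),
  ((0,0),(1,1),(2,0),(-1,1)),
  ((0,0),(1,1),(-2,0),(1,-1)),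
  ((0,0),(1,1),(-2,0),(-1,1)),
  ((0,0),(-1,-1),(2,0),(1,-1)),
  ((0,0),(-1,-1),(2,0),(-1,1)),
  ((0,0),(-1,-1),(-2,0),(1,-1)),
  ((0,0),(-1,-1),(-2,0),(-1,1)),
  ((0,0),(2,0),(1,-1),(1,1)),
  ((0,0),(2,0),(-1,1),(1,1)),
  ((0,0),(-2,0),(1,-1),(1,1)),
  ((0,0),(-2,0),(-1,1),(1,1)),
  ((0,0),(2,0),(1,-1),(-1,-1)),
  ((0,0),(2,0),(-1,1),(-1,-1)),
  ((0,0),(-2,0),(1,-1),(-1,-1)),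
  ((0,0),(-2,0),(-1,1),(-1,-1)),
  ((0,0),(1,-1),(1,1),(2,0)),
  ((0,0),(-1,1),(1,1),(2,0)),
  ((0,0),(1,-1),(1,1),(-2,0)),
  ((0,0),(-1,1),(1,1),(-2,0)),
  ((0,0),(1,-1),(-1,-1),(2,0)),
  ((0,0),(-1,1),(-1,-1),(2,0)),
  ((0,0),(1,-1),(-1,-1),(-2,0)),
  ((0,0),(-1,1),(-1,-1),(-2,0)),
  ((1,1),(0,0),(1,-1),(2,0)),
  ((1,1),(0,0),(-1,1),(2,0)),
  ((1,1),(0,0),(1,-1),(-2,0)),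
  ((1,1),(0,0),(-1,1),(-2,0)),
  ((-1,-1),(0,0),(1,-1),(2,0)),
  ((-1,-1),(0,0),(-1,1),(2,0)),
  ((-1,-1),(0,0),(1,-1),(-2,0)),
  ((-1,-1),(0,0),(-1,1),(-2,0)),
  ((1,1),(2,0),(0,0),(1,-1)),
  ((1,1),(2,0),(0,0),(-1,1)),
  ((1,1),(-2,0),(0,0),(1,-1)),
  ((1,1),(-2,0),(0,0),(-1,1)),
  ((-1,-1),(2,0),(0,0),(1,-1)),
  ((-1,-1),(2,0),(0,0),(-1,1)),
  ((-1,-1),(-2,0),(0,0),(1,-1)),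
  ((-1,-1),(-2,0),(0,0),(-1,1)),
  ((1,1),(1,-1),(2,0),(0,0)),
  ((1,1),(-1,1),(2,0),(0,0)),
  ((1,1),(1,-1),(-2,0),(0,0)),
  ((1,1),(-1,1),(-2,0),(0,0)),
  ((-1,-1),(1,-1),(2,0),(0,0)),
  ((-1,-1),(-1,1),(2,0),(0,0)),
  ((-1,-1),(1,-1),(-2,0),(0,0)),
  ((-1,-1),(-1,1),(-2,0),(0,0)),
  ((2,0),(0,0),(1,1),(1,-1)),
  ((2,0),(0,0),(1,1),(-1,1)),
  ((-2,0),(0,0),(1,1),(1,-1)),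
  ((-2,0),(0,0),(1,1),(-1,1)),
  ((2,0),(0,0),(-1,-1),(1,-1)),
  ((2,0),(0,0),(-1,-1),(-1,1)),
  ((-2,0),(0,0),(-1,-1),(1,-1)),
  ((-2,0),(0,0),(-1,-1),(-1,1)),
  ((2,0),(1,1),(1,-1),(0,0)),
  ((2,0),(1,1),(-1,1),(0,0)),
  ((-2,0),(1,1),(1,-1),(0,0)),
  ((-2,0),(1,1),(-1,1),(0,0)),
  ((2,0),(-1,-1),(1,-1),(0,0)),
  ((2,0),(-1,-1),(-1,1),(0,0)),
  ((-2,0),(-1,-1),(1,-1),(0,0)),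
  ((-2,0),(-1,-1),(-1,1),(0,0)),
  ((2,0),(1,-1),(0,0),(1,1)),
  ((2,0),(-1,1),(0,0),(1,1)),
  ((-2,0),(1,-1),(0,0),(1,1)),
  ((-2,0),(-1,1),(0,0),(1,1)),
  ((2,0),(1,-1),(0,0),(-1,-1)),
  ((2,0),(-1,1),(0,0),(-1,-1)),
  ((-2,0),(1,-1),(0,0),(-1,-1)),
  ((-2,0),(-1,1),(0,0),(-1,-1)),
  ((1,-1),(0,0),(2,0),(1,1)),
  ((-1,1),(0,0),(2,0),(1,1)),
  ((1,-1),(0,0),(-2,0),(1,1)),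
  ((-1,1),(0,0),(-2,0),(1,1)),
  ((1,-1),(0,0),(2,0),(-1,-1)),
  ((-1,1),(0,0),(2,0),(-1,-1)),
  ((1,-1),(0,0),(-2,0),(-1,-1)),
  ((-1,1),(0,0),(-2,0),(-1,-1)),
  ((1,-1),(1,1),(0,0),(2,0)),
  ((-1,1),(1,1),(0,0),(2,0)),
  ((1,-1),(1,1),(0,0),(-2,0)),
  ((-1,1),(1,1),(0,0),(-2,0)),
  ((1,-1),(-1,-1),(0,0),(2,0)),
  ((-1,1),(-1,-1),(0,0),(2,0)),
  ((1,-1),(-1,-1),(0,0),(-2,0)),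
  ((-1,1),(-1,-1),(0,0),(-2,0)),
  ((1,-1),(2,0),(1,1),(0,0)),
  ((-1,1),(2,0),(1,1),(0,0)),
  ((1,-1),(-2,0),(1,1),(0,0)),
  ((-1,1),(-2,0),(1,1),(0,0)),
  ((1,-1),(2,0),(-1,-1),(0,0)),
  ((-1,1),(2,0),(-1,-1),(0,0)),
  ((1,-1),(-2,0),(-1,-1),(0,0)),
  ((-1,1),(-2,0),(-1,-1),(0,0))]

set_option maxRecDepth 100000 in
set_option maxHeartbeats 4000000 in
lemma XqMem : ∀ (p : Equiv.Perm (Fin 4)), Equiv.Perm.sign p = 1 → ∀ ea eb ec : Bool,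
    Xq p ea eb ec ∈ S := by decide

set_option maxRecDepth 100000 in
lemma XhMem : ∀ e0 e1 e2 e3, Xh e0 e1 e2 e3 ∈ S := by decide
set_option maxRecDepth 100000 in
lemma XL1Mem : ∀ e, XL1 e ∈ S := by decide
set_option maxRecDepth 100000 in
lemma XL2Mem : ∀ e, XL2 e ∈ S := by decide
set_option maxRecDepth 100000 in
lemma XL3Mem : ∀ e, XL3 e ∈ S := by decide
set_option maxRecDepth 100000 in
lemma XL4Mem : ∀ e, XL4 e ∈ S := by decide

set_option maxRecDepth 1000000 in
set_option maxHeartbeats 10000000 in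
lemma SmulG1 : ∀ a ∈ S, ∃ c ∈ S, q5mul a g1q = q5smul 4 c := by decide
set_option maxRecDepth 1000000 in
set_option maxHeartbeats 10000000 in
lemma SmulG2 : ∀ a ∈ S, ∃ c ∈ S, q5mul a g2q = q5smul 4 c := by decide
set_option maxRecDepth 1000000 in
set_option maxHeartbeats 10000000 in
lemma SmulG1c : ∀ a ∈ S, ∃ c ∈ S, q5mul a (q5conj g1q) = q5smul 4 c := by decide
set_option maxRecDepth 1000000 in
set_option maxHeartbeats 10000000 in
lemma SmulG2c : ∀ a ∈ S, ∃ c ∈ S, q5mul a (q5conj g2q) = q5smul 4 c := by decide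

/-! ### Evaluation lemmas -/

lemma coordEq (ea eb ec : Bool) (j : Fin 4) :
    (4:ℝ)⁻¹ * evg (vq ea eb ec j) = ![0, sgR ea * gr, sgR eb, sgR ec * gs] j / 2 := by
  fin_cases j <;> simp [vq, evg, sgR, gr, gs] <;> push_cast <;> ring

lemma qcoords_ev (x : Q5) :
    qcoords (ev x) = ![(4:ℝ)⁻¹ * evg x.1, (4:ℝ)⁻¹ * evg x.2.1,
      (4:ℝ)⁻¹ * evg x.2.2.1, (4:ℝ)⁻¹ * evg x.2.2.2] := by
  funext i
  fin_cases i <;>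
    simp [qcoords, ev, evRaw, qmk_re, qmk_imI, qmk_imJ, qmk_imK, Matrix.cons_val_zero, Matrix.cons_val_one, Matrix.head_cons]

lemma ev_eq_of_coords {x : Quaternion ℝ} {q : Q5}
    (h : ∀ i, qcoords (ev q) i = qcoords x i) : ev q = x := by
  apply Quaternion.ext
  · exact h 0
  · exact h 1
  · exact h 2
  · exact h 3

lemma qcoords_ev_Xq (p : Equiv.Perm (Fin 4)) (ea eb ec : Bool) (i : Fin 4) :
    qcoords (ev (Xq p ea eb ec)) i = (4:ℝ)⁻¹ * evg (vq ea eb ec (p i)) := by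
  rw [qcoords_ev]; fin_cases i <;> rfl

lemma evXh (e0 e1 e2 e3 : Bool) :
    ev (Xh e0 e1 e2 e3) = qmk (sgR e0 / 2) (sgR e1 / 2) (sgR e2 / 2) (sgR e3 / 2) := by
  apply Quaternion.ext <;> simp [ev, evRaw, Xh, qmk_re, qmk_imI, qmk_imJ, qmk_imK, evg, sgR] <;> push_cast <;> ring

lemma evXL1 (e : Bool) : ev (XL1 e) = qmk (sgR e) 0 0 0 := by
  apply Quaternion.ext <;> simp [ev, evRaw, XL1, qmk_re, qmk_imI, qmk_imJ, qmk_imK, evg, sgR] <;> push_cast <;> ring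
lemma evXL2 (e : Bool) : ev (XL2 e) = qmk 0 (sgR e) 0 0 := by
  apply Quaternion.ext <;> simp [ev, evRaw, XL2, qmk_re, qmk_imI, qmk_imJ, qmk_imK, evg, sgR] <;> push_cast <;> ring
lemma evXL3 (e : Bool) : ev (XL3 e) = qmk 0 0 (sgR e) 0 := by
  apply Quaternion.ext <;> simp [ev, evRaw, XL3, qmk_re, qmk_imI, qmk_imJ, qmk_imK, evg, sgR] <;> push_cast <;> ring
lemma evXL4 (e : Bool) : ev (XL4 e) = qmk 0 0 0 (sgR e) := by
  apply Quaternion.ext <;> simp [ev, evRaw, XL4, qmk_re, qmk_imI, qmk_imJ, qmk_imK, evg, sgR] <;> push_cast <;> ring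

/-! ### Membership of representatives in the icosians -/

lemma AextraGen (p : Equiv.Perm (Fin 4)) (hp : Equiv.Perm.sign p = 1) (ea eb ec : Bool) :
    ev (Xq p ea eb ec) ∈ IcoExtra := by
  refine ⟨p, Equiv.Perm.mem_alternatingGroup.2 hp, sgR ea, sgR eb, sgR ec,
    pm_sgR ea, pm_sgR eb, pm_sgR ec, fun i => ?_⟩
  rw [qcoords_ev_Xq]; exact coordEq ea eb ec (p i)

lemma ALip1 (e : Bool) : ev (XL1 e) ∈ Icosians :=
  Or.inl (Or.inl ⟨sgR e, pm_sgR e, Or.inl (evXL1 e)⟩)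
lemma ALip2 (e : Bool) : ev (XL2 e) ∈ Icosians :=
  Or.inl (Or.inl ⟨sgR e, pm_sgR e, Or.inr (Or.inl (evXL2 e))⟩)
lemma ALip3 (e : Bool) : ev (XL3 e) ∈ Icosians :=
  Or.inl (Or.inl ⟨sgR e, pm_sgR e, Or.inr (Or.inr (Or.inl (evXL3 e)))⟩)
lemma ALip4 (e : Bool) : ev (XL4 e) ∈ Icosians :=
  Or.inl (Or.inl ⟨sgR e, pm_sgR e, Or.inr (Or.inr (Or.inr (evXL4 e)))⟩)
lemma AHalf (e0 e1 e2 e3 : Bool) : ev (Xh e0 e1 e2 e3) ∈ Icosians :=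
  Or.inl (Or.inr ⟨sgR e0, sgR e1, sgR e2, sgR e3,
    pm_sgR e0, pm_sgR e1, pm_sgR e2, pm_sgR e3, evXh e0 e1 e2 e3⟩)

lemma ev_mem_congr {T : Set (Quaternion ℝ)} {q q' : Q5} (h : q = q') (hq : ev q ∈ T) :
    ev q' ∈ T := h ▸ hq
def pe0 : Equiv.Perm (Fin 4) := ⟨![0,1,2,3], ![0,1,2,3], by intro x; fin_cases x <;> rfl, by intro x; fin_cases x <;> rfl⟩
lemma hpe0 : Equiv.Perm.sign pe0 = 1 := by decide
def pe1 : Equiv.Perm (Fin 4) := ⟨![0,2,3,1], ![0,3,1,2], by intro x; fin_cases x <;> rfl, by intro x; fin_cases x <;> rfl⟩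
lemma hpe1 : Equiv.Perm.sign pe1 = 1 := by decide
def pe2 : Equiv.Perm (Fin 4) := ⟨![0,3,1,2], ![0,2,3,1], by intro x; fin_cases x <;> rfl, by intro x; fin_cases x <;> rfl⟩
lemma hpe2 : Equiv.Perm.sign pe2 = 1 := by decide
def pe3 : Equiv.Perm (Fin 4) := ⟨![1,0,3,2], ![1,0,3,2], by intro x; fin_cases x <;> rfl, by intro x; fin_cases x <;> rfl⟩
lemma hpe3 : Equiv.Perm.sign pe3 = 1 := by decide
def pe4 : Equiv.Perm (Fin 4) := ⟨![1,2,0,3], ![2,0,1,3], by intro x; fin_cases x <;> rfl, by intro x; fin_cases x <;> rfl⟩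
lemma hpe4 : Equiv.Perm.sign pe4 = 1 := by decide
def pe5 : Equiv.Perm (Fin 4) := ⟨![1,3,2,0], ![3,0,2,1], by intro x; fin_cases x <;> rfl, by intro x; fin_cases x <;> rfl⟩
lemma hpe5 : Equiv.Perm.sign pe5 = 1 := by decide
def pe6 : Equiv.Perm (Fin 4) := ⟨![2,0,1,3], ![1,2,0,3], by intro x; fin_cases x <;> rfl, by intro x; fin_cases x <;> rfl⟩
lemma hpe6 : Equiv.Perm.sign pe6 = 1 := by decide
def pe7 : Equiv.Perm (Fin 4) := ⟨![2,1,3,0], ![3,1,0,2], by intro x; fin_cases x <;> rfl, by intro x; fin_cases x <;> rfl⟩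
lemma hpe7 : Equiv.Perm.sign pe7 = 1 := by decide
def pe8 : Equiv.Perm (Fin 4) := ⟨![2,3,0,1], ![2,3,0,1], by intro x; fin_cases x <;> rfl, by intro x; fin_cases x <;> rfl⟩
lemma hpe8 : Equiv.Perm.sign pe8 = 1 := by decide
def pe9 : Equiv.Perm (Fin 4) := ⟨![3,0,2,1], ![1,3,2,0], by intro x; fin_cases x <;> rfl, by intro x; fin_cases x <;> rfl⟩
lemma hpe9 : Equiv.Perm.sign pe9 = 1 := by decide
def pe10 : Equiv.Perm (Fin 4) := ⟨![3,1,0,2], ![2,1,3,0], by intro x; fin_cases x <;> rfl, by intro x; fin_cases x <;> rfl⟩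
lemma hpe10 : Equiv.Perm.sign pe10 = 1 := by decide
def pe11 : Equiv.Perm (Fin 4) := ⟨![3,2,1,0], ![3,2,1,0], by intro x; fin_cases x <;> rfl, by intro x; fin_cases x <;> rfl⟩
lemma hpe11 : Equiv.Perm.sign pe11 = 1 := by decide

set_option maxRecDepth 100000 in
lemma evS_mem : ∀ s ∈ S, ev s ∈ Icosians := by
  intro s hs
  fin_cases hs
  exacts [ev_mem_congr (by decide) (ALip1 true),
    ev_mem_congr (by decide) (ALip1 false),
    ev_mem_congr (by decide) (ALip2 true),
    ev_mem_congr (by decide) (ALip2 false),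
    ev_mem_congr (by decide) (ALip3 true),
    ev_mem_congr (by decide) (ALip3 false),
    ev_mem_congr (by decide) (ALip4 true),
    ev_mem_congr (by decide) (ALip4 false),
    ev_mem_congr (by decide) (AHalf true true true true),
    ev_mem_congr (by decide) (AHalf true true true false),
    ev_mem_congr (by decide) (AHalf true true false true),
    ev_mem_congr (by decide) (AHalf true true false false),
    ev_mem_congr (by decide) (AHalf true false true true),
    ev_mem_congr (by decide) (AHalf true false true false),
    ev_mem_congr (by decide) (AHalf true false false true),
    ev_mem_congr (by decide) (AHalf true false false false),
    ev_mem_congr (by decide) (AHalf false true true true),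
    ev_mem_congr (by decide) (AHalf false true true false),
    ev_mem_congr (by decide) (AHalf false true false true),
    ev_mem_congr (by decide) (AHalf false true false false),
    ev_mem_congr (by decide) (AHalf false false true true),
    ev_mem_congr (by decide) (AHalf false false true false),
    ev_mem_congr (by decide) (AHalf false false false true),
    ev_mem_congr (by decide) (AHalf false false false false),
    ev_mem_congr (by decide) (Or.inr (AextraGen pe0 hpe0 true true true)),
    ev_mem_congr (by decide) (Or.inr (AextraGen pe0 hpe0 true true false)),
    ev_mem_congr (by decide) (Or.inr (AextraGen pe0 hpe0 true false true)),
    ev_mem_congr (by decide) (Or.inr (AextraGen pe0 hpe0 true false false)),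
    ev_mem_congr (by decide) (Or.inr (AextraGen pe0 hpe0 false true true)),
    ev_mem_congr (by decide) (Or.inr (AextraGen pe0 hpe0 false true false)),
    ev_mem_congr (by decide) (Or.inr (AextraGen pe0 hpe0 false false true)),
    ev_mem_congr (by decide) (Or.inr (AextraGen pe0 hpe0 false false false)),
    ev_mem_congr (by decide) (Or.inr (AextraGen pe1 hpe1 true true true)),
    ev_mem_congr (by decide) (Or.inr (AextraGen pe1 hpe1 true true false)),
    ev_mem_congr (by decide) (Or.inr (AextraGen pe1 hpe1 true false true)),
    ev_mem_congr (by decide) (Or.inr (AextraGen pe1 hpe1 true false false)),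
    ev_mem_congr (by decide) (Or.inr (AextraGen pe1 hpe1 false true true)),
    ev_mem_congr (by decide) (Or.inr (AextraGen pe1 hpe1 false true false)),
    ev_mem_congr (by decide) (Or.inr (AextraGen pe1 hpe1 false false true)),
    ev_mem_congr (by decide) (Or.inr (AextraGen pe1 hpe1 false false false)),
    ev_mem_congr (by decide) (Or.inr (AextraGen pe2 hpe2 true true true)),
    ev_mem_congr (by decide) (Or.inr (AextraGen pe2 hpe2 true true false)),
    ev_mem_congr (by decide) (Or.inr (AextraGen pe2 hpe2 true false true)),
    ev_mem_congr (by decide) (Or.inr (AextraGen pe2 hpe2 true false false)),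
    ev_mem_congr (by decide) (Or.inr (AextraGen pe2 hpe2 false true true)),
    ev_mem_congr (by decide) (Or.inr (AextraGen pe2 hpe2 false true false)),
    ev_mem_congr (by decide) (Or.inr (AextraGen pe2 hpe2 false false true)),
    ev_mem_congr (by decide) (Or.inr (AextraGen pe2 hpe2 false false false)),
    ev_mem_congr (by decide) (Or.inr (AextraGen pe3 hpe3 true true true)),
    ev_mem_congr (by decide) (Or.inr (AextraGen pe3 hpe3 true true false)),
    ev_mem_congr (by decide) (Or.inr (AextraGen pe3 hpe3 true false true)),
    ev_mem_congr (by decide) (Or.inr (AextraGen pe3 hpe3 true false false)),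
    ev_mem_congr (by decide) (Or.inr (AextraGen pe3 hpe3 false true true)),
    ev_mem_congr (by decide) (Or.inr (AextraGen pe3 hpe3 false true false)),
    ev_mem_congr (by decide) (Or.inr (AextraGen pe3 hpe3 false false true)),
    ev_mem_congr (by decide) (Or.inr (AextraGen pe3 hpe3 false false false)),
    ev_mem_congr (by decide) (Or.inr (AextraGen pe4 hpe4 true true true)),
    ev_mem_congr (by decide) (Or.inr (AextraGen pe4 hpe4 true true false)),
    ev_mem_congr (by decide) (Or.inr (AextraGen pe4 hpe4 true false true)),
    ev_mem_congr (by decide) (Or.inr (AextraGen pe4 hpe4 true false false)),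
    ev_mem_congr (by decide) (Or.inr (AextraGen pe4 hpe4 false true true)),
    ev_mem_congr (by decide) (Or.inr (AextraGen pe4 hpe4 false true false)),
    ev_mem_congr (by decide) (Or.inr (AextraGen pe4 hpe4 false false true)),
    ev_mem_congr (by decide) (Or.inr (AextraGen pe4 hpe4 false false false)),
    ev_mem_congr (by decide) (Or.inr (AextraGen pe5 hpe5 true true true)),
    ev_mem_congr (by decide) (Or.inr (AextraGen pe5 hpe5 true true false)),
    ev_mem_congr (by decide) (Or.inr (AextraGen pe5 hpe5 true false true)),
    ev_mem_congr (by decide) (Or.inr (AextraGen pe5 hpe5 true false false)),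
    ev_mem_congr (by decide) (Or.inr (AextraGen pe5 hpe5 false true true)),
    ev_mem_congr (by decide) (Or.inr (AextraGen pe5 hpe5 false true false)),
    ev_mem_congr (by decide) (Or.inr (AextraGen pe5 hpe5 false false true)),
    ev_mem_congr (by decide) (Or.inr (AextraGen pe5 hpe5 false false false)),
    ev_mem_congr (by decide) (Or.inr (AextraGen pe6 hpe6 true true true)),
    ev_mem_congr (by decide) (Or.inr (AextraGen pe6 hpe6 true true false)),
    ev_mem_congr (by decide) (Or.inr (AextraGen pe6 hpe6 true false true)),
    ev_mem_congr (by decide) (Or.inr (AextraGen pe6 hpe6 true false false)),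
    ev_mem_congr (by decide) (Or.inr (AextraGen pe6 hpe6 false true true)),
    ev_mem_congr (by decide) (Or.inr (AextraGen pe6 hpe6 false true false)),
    ev_mem_congr (by decide) (Or.inr (AextraGen pe6 hpe6 false false true)),
    ev_mem_congr (by decide) (Or.inr (AextraGen pe6 hpe6 false false false)),
    ev_mem_congr (by decide) (Or.inr (AextraGen pe7 hpe7 true true true)),
    ev_mem_congr (by decide) (Or.inr (AextraGen pe7 hpe7 true true false)),
    ev_mem_congr (by decide) (Or.inr (AextraGen pe7 hpe7 true false true)),
    ev_mem_congr (by decide) (Or.inr (AextraGen pe7 hpe7 true false false)),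
    ev_mem_congr (by decide) (Or.inr (AextraGen pe7 hpe7 false true true)),
    ev_mem_congr (by decide) (Or.inr (AextraGen pe7 hpe7 false true false)),
    ev_mem_congr (by decide) (Or.inr (AextraGen pe7 hpe7 false false true)),
    ev_mem_congr (by decide) (Or.inr (AextraGen pe7 hpe7 false false false)),
    ev_mem_congr (by decide) (Or.inr (AextraGen pe8 hpe8 true true true)),
    ev_mem_congr (by decide) (Or.inr (AextraGen pe8 hpe8 true true false)),
    ev_mem_congr (by decide) (Or.inr (AextraGen pe8 hpe8 true false true)),
    ev_mem_congr (by decide) (Or.inr (AextraGen pe8 hpe8 true false false)),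
    ev_mem_congr (by decide) (Or.inr (AextraGen pe8 hpe8 false true true)),
    ev_mem_congr (by decide) (Or.inr (AextraGen pe8 hpe8 false true false)),
    ev_mem_congr (by decide) (Or.inr (AextraGen pe8 hpe8 false false true)),
    ev_mem_congr (by decide) (Or.inr (AextraGen pe8 hpe8 false false false)),
    ev_mem_congr (by decide) (Or.inr (AextraGen pe9 hpe9 true true true)),
    ev_mem_congr (by decide) (Or.inr (AextraGen pe9 hpe9 true true false)),
    ev_mem_congr (by decide) (Or.inr (AextraGen pe9 hpe9 true false true)),
    ev_mem_congr (by decide) (Or.inr (AextraGen pe9 hpe9 true false false)),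
    ev_mem_congr (by decide) (Or.inr (AextraGen pe9 hpe9 false true true)),
    ev_mem_congr (by decide) (Or.inr (AextraGen pe9 hpe9 false true false)),
    ev_mem_congr (by decide) (Or.inr (AextraGen pe9 hpe9 false false true)),
    ev_mem_congr (by decide) (Or.inr (AextraGen pe9 hpe9 false false false)),
    ev_mem_congr (by decide) (Or.inr (AextraGen pe10 hpe10 true true true)),
    ev_mem_congr (by decide) (Or.inr (AextraGen pe10 hpe10 true true false)),
    ev_mem_congr (by decide) (Or.inr (AextraGen pe10 hpe10 true false true)),
    ev_mem_congr (by decide) (Or.inr (AextraGen pe10 hpe10 true false false)),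
    ev_mem_congr (by decide) (Or.inr (AextraGen pe10 hpe10 false true true)),
    ev_mem_congr (by decide) (Or.inr (AextraGen pe10 hpe10 false true false)),
    ev_mem_congr (by decide) (Or.inr (AextraGen pe10 hpe10 false false true)),
    ev_mem_congr (by decide) (Or.inr (AextraGen pe10 hpe10 false false false)),
    ev_mem_congr (by decide) (Or.inr (AextraGen pe11 hpe11 true true true)),
    ev_mem_congr (by decide) (Or.inr (AextraGen pe11 hpe11 true true false)),
    ev_mem_congr (by decide) (Or.inr (AextraGen pe11 hpe11 true false true)),
    ev_mem_congr (by decide) (Or.inr (AextraGen pe11 hpe11 true false false)),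
    ev_mem_congr (by decide) (Or.inr (AextraGen pe11 hpe11 false true true)),
    ev_mem_congr (by decide) (Or.inr (AextraGen pe11 hpe11 false true false)),
    ev_mem_congr (by decide) (Or.inr (AextraGen pe11 hpe11 false false true)),
    ev_mem_congr (by decide) (Or.inr (AextraGen pe11 hpe11 false false false))]

lemma icos_toS : ∀ x ∈ Icosians, ∃ s ∈ S, ev s = x := by
  rintro x ((⟨a, ha, rfl | rfl | rfl | rfl⟩ | ⟨a, b, c, dd, ha, hb, hc, hd, rfl⟩) |
    ⟨p, hp, a, b, c, ha, hb, hc, hco⟩)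
  · obtain ⟨e, rfl⟩ := exists_sg a ha; exact ⟨XL1 e, XL1Mem e, evXL1 e⟩
  · obtain ⟨e, rfl⟩ := exists_sg a ha; exact ⟨XL2 e, XL2Mem e, evXL2 e⟩
  · obtain ⟨e, rfl⟩ := exists_sg a ha; exact ⟨XL3 e, XL3Mem e, evXL3 e⟩
  · obtain ⟨e, rfl⟩ := exists_sg a ha; exact ⟨XL4 e, XL4Mem e, evXL4 e⟩
  · obtain ⟨e0, rfl⟩ := exists_sg a ha; obtain ⟨e1, rfl⟩ := exists_sg b hb
    obtain ⟨e2, rfl⟩ := exists_sg c hc; obtain ⟨e3, rfl⟩ := exists_sg dd hd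
    exact ⟨Xh e0 e1 e2 e3, XhMem e0 e1 e2 e3, evXh e0 e1 e2 e3⟩
  · obtain ⟨ea, rfl⟩ := exists_sg a ha; obtain ⟨eb, rfl⟩ := exists_sg b hb
    obtain ⟨ec, rfl⟩ := exists_sg c hc
    refine ⟨Xq p ea eb ec, XqMem p (Equiv.Perm.mem_alternatingGroup.1 hp) ea eb ec,
      ev_eq_of_coords fun i => ?_⟩
    rw [qcoords_ev_Xq, coordEq]
    exact (hco i).symm

/-! ### The generators as icosians and units -/

lemma R1ev : ev g1q = iota (vec3 (-1) 0 0) * iota ((2:ℝ)⁻¹ • vec3 gr 1 gs) := by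
  apply Quaternion.ext <;>
    simp [ev, evRaw, g1q, qmk_re, qmk_imI, qmk_imJ, qmk_imK, evg, iota, vec3, gr, gs, Quaternion.re_mul, Quaternion.imI_mul,
      Quaternion.imJ_mul, Quaternion.imK_mul, PiLp.smul_apply, smul_eq_mul,
      Matrix.cons_val_zero, Matrix.cons_val_one, Matrix.head_cons] <;> ring

lemma R2ev : ev g2q = iota ((2:ℝ)⁻¹ • vec3 gr 1 gs) * iota (vec3 0 0 (-1)) := by
  apply Quaternion.ext <;>
    simp [ev, evRaw, g2q, qmk_re, qmk_imI, qmk_imJ, qmk_imK, evg, iota, vec3, gr, gs, Quaternion.re_mul, Quaternion.imI_mul,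
      Quaternion.imJ_mul, Quaternion.imK_mul, PiLp.smul_apply, smul_eq_mul,
      Matrix.cons_val_zero, Matrix.cons_val_one, Matrix.head_cons] <;> ring

def u1 : (Quaternion ℝ)ˣ :=
  ⟨ev g1q, ev (q5conj g1q),
    by rw [ev_mul_of (show q5mul g1q (q5conj g1q) = q5smul 4 one5 by decide), ev_one],
    by rw [ev_mul_of (show q5mul (q5conj g1q) g1q = q5smul 4 one5 by decide), ev_one]⟩
def u2 : (Quaternion ℝ)ˣ :=
  ⟨ev g2q, ev (q5conj g2q),
    by rw [ev_mul_of (show q5mul g2q (q5conj g2q) = q5smul 4 one5 by decide), ev_one],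
    by rw [ev_mul_of (show q5mul (q5conj g2q) g2q = q5smul 4 one5 by decide), ev_one]⟩

lemma inv_ev_g1 : (ev g1q)⁻¹ = ev (q5conj g1q) :=
  inv_eq_of_mul_eq_one_right
    (by rw [ev_mul_of (show q5mul g1q (q5conj g1q) = q5smul 4 one5 by decide), ev_one])
lemma inv_ev_g2 : (ev g2q)⁻¹ = ev (q5conj g2q) :=
  inv_eq_of_mul_eq_one_right
    (by rw [ev_mul_of (show q5mul g2q (q5conj g2q) = q5smul 4 one5 by decide), ev_one])

def genU : Set (Quaternion ℝ)ˣ :=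
  {u : (Quaternion ℝ)ˣ |
    (u : Quaternion ℝ) = iota (vec3 (-1) 0 0) * iota ((2:ℝ)⁻¹ • vec3 gr 1 gs) ∨
    (u : Quaternion ℝ) = iota ((2:ℝ)⁻¹ • vec3 gr 1 gs) * iota (vec3 0 0 (-1))}

def Img : Set (Quaternion ℝ) :=
  Units.val '' ((Subgroup.closure genU : Subgroup (Quaternion ℝ)ˣ) : Set (Quaternion ℝ)ˣ)

lemma hg1Img : ev g1q ∈ Img := ⟨u1, Subgroup.subset_closure (Or.inl R1ev), rfl⟩
lemma hg2Img : ev g2q ∈ Img := ⟨u2, Subgroup.subset_closure (Or.inr R2ev), rfl⟩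

lemma stepImg {a b c : Q5} (h : q5mul a b = q5smul 4 c) (ha : ev a ∈ Img) (hb : ev b ∈ Img) :
    ev c ∈ Img := by
  obtain ⟨u, hu, hue⟩ := ha; obtain ⟨v, hv, hve⟩ := hb
  exact ⟨u * v, mul_mem hu hv, by rw [Units.val_mul, hue, hve, ev_mul_of h]⟩

set_option maxRecDepth 100000 in
set_option maxHeartbeats 8000000 in
lemma allS : ∀ s ∈ S, ev s ∈ Img := by
  have hh0 : ev (((4,0),(0,0),(0,0),(0,0)) : Q5) ∈ Img := by
    show ev one5 ∈ Img; rw [ev_one]; exact ⟨1, one_mem _, rfl⟩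
  have hh50 : ev (((1,1),(0,0),(1,-1),(-2,0)) : Q5) ∈ Img := hg1Img
  have hh114 : ev (((1,-1),(-2,0),(1,1),(0,0)) : Q5) ∈ Img := hg2Img
  have hh103 : ev (((-1,1),(0,0),(-2,0),(-1,-1)) : Q5) ∈ Img := stepImg (by decide) hh50 hg1Img
  have hh4 : ev (((0,0),(0,0),(4,0),(0,0)) : Q5) ∈ Img := stepImg (by decide) hh50 hg2Img
  have hh29 : ev (((0,0),(-1,-1),(2,0),(-1,1)) : Q5) ∈ Img := stepImg (by decide) hh114 hg1Img
  have hh71 : ev (((-1,-1),(-1,1),(-2,0),(0,0)) : Q5) ∈ Img := stepImg (by decide) hh114 hg2Img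
  have hh102 : ev (((1,-1),(0,0),(-2,0),(-1,-1)) : Q5) ∈ Img := stepImg (by decide) hh103 hg1Img
  have hh113 : ev (((-1,1),(2,0),(1,1),(0,0)) : Q5) ∈ Img := stepImg (by decide) hh103 hg2Img
  have hh115 : ev (((-1,1),(-2,0),(1,1),(0,0)) : Q5) ∈ Img := stepImg (by decide) hh4 hg1Img
  have hh52 : ev (((-1,-1),(0,0),(1,-1),(2,0)) : Q5) ∈ Img := stepImg (by decide) hh4 hg2Img
  have hh109 : ev (((-1,1),(-1,-1),(0,0),(2,0)) : Q5) ∈ Img := stepImg (by decide) hh29 hg1Img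
  have hh54 : ev (((-1,-1),(0,0),(1,-1),(-2,0)) : Q5) ∈ Img := stepImg (by decide) hh29 hg2Img
  have hh61 : ev (((-1,-1),(2,0),(0,0),(-1,1)) : Q5) ∈ Img := stepImg (by decide) hh71 hg1Img
  have hh67 : ev (((1,1),(-1,1),(-2,0),(0,0)) : Q5) ∈ Img := stepImg (by decide) hh71 hg2Img
  have hh81 : ev (((2,0),(1,1),(-1,1),(0,0)) : Q5) ∈ Img := stepImg (by decide) hh102 hg2Img
  have hh72 : ev (((2,0),(0,0),(1,1),(1,-1)) : Q5) ∈ Img := stepImg (by decide) hh113 hg1Img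
  have hh90 : ev (((-2,0),(1,-1),(0,0),(1,1)) : Q5) ∈ Img := stepImg (by decide) hh113 hg2Img
  have hh85 : ev (((2,0),(-1,-1),(-1,1),(0,0)) : Q5) ∈ Img := stepImg (by decide) hh115 hg1Img
  have hh1 : ev (((-4,0),(0,0),(0,0),(0,0)) : Q5) ∈ Img := stepImg (by decide) hh115 hg2Img
  have hh91 : ev (((-2,0),(-1,1),(0,0),(1,1)) : Q5) ∈ Img := stepImg (by decide) hh52 hg1Img
  have hh76 : ev (((2,0),(0,0),(-1,-1),(1,-1)) : Q5) ∈ Img := stepImg (by decide) hh52 hg2Img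
  have hh14 : ev (((2,0),(-2,0),(-2,0),(2,0)) : Q5) ∈ Img := stepImg (by decide) hh109 hg1Img
  have hh94 : ev (((-2,0),(1,-1),(0,0),(-1,-1)) : Q5) ∈ Img := stepImg (by decide) hh109 hg2Img
  have hh80 : ev (((2,0),(1,1),(1,-1),(0,0)) : Q5) ∈ Img := stepImg (by decide) hh54 hg2Img
  have hh16 : ev (((-2,0),(2,0),(2,0),(2,0)) : Q5) ∈ Img := stepImg (by decide) hh61 hg1Img
  have hh77 : ev (((2,0),(0,0),(-1,-1),(-1,1)) : Q5) ∈ Img := stepImg (by decide) hh61 hg2Img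
  have hh11 : ev (((2,0),(2,0),(-2,0),(-2,0)) : Q5) ∈ Img := stepImg (by decide) hh67 hg1Img
  have hh9 : ev (((2,0),(2,0),(2,0),(-2,0)) : Q5) ∈ Img := stepImg (by decide) hh81 hg1Img
  have hh35 : ev (((0,0),(-2,0),(-1,1),(1,1)) : Q5) ∈ Img := stepImg (by decide) hh81 hg2Img
  have hh13 : ev (((2,0),(-2,0),(2,0),(-2,0)) : Q5) ∈ Img := stepImg (by decide) hh72 hg1Img
  have hh53 : ev (((-1,-1),(0,0),(-1,1),(2,0)) : Q5) ∈ Img := stepImg (by decide) hh72 hg2Img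
  have hh6 : ev (((0,0),(0,0),(0,0),(4,0)) : Q5) ∈ Img := stepImg (by decide) hh90 hg1Img
  have hh46 : ev (((0,0),(1,-1),(-1,-1),(-2,0)) : Q5) ∈ Img := stepImg (by decide) hh90 hg2Img
  have hh84 : ev (((2,0),(-1,-1),(1,-1),(0,0)) : Q5) ∈ Img := stepImg (by decide) hh85 hg1Img
  have hh55 : ev (((-1,-1),(0,0),(-1,1),(-2,0)) : Q5) ∈ Img := stepImg (by decide) hh85 hg2Img
  have hh117 : ev (((-1,1),(2,0),(-1,-1),(0,0)) : Q5) ∈ Img := stepImg (by decide) hh1 hg2Img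
  have hh33 : ev (((0,0),(2,0),(-1,1),(1,1)) : Q5) ∈ Img := stepImg (by decide) hh91 hg1Img
  have hh119 : ev (((-1,1),(-2,0),(-1,-1),(0,0)) : Q5) ∈ Img := stepImg (by decide) hh91 hg2Img
  have hh47 : ev (((0,0),(-1,1),(-1,-1),(-2,0)) : Q5) ∈ Img := stepImg (by decide) hh76 hg1Img
  have hh39 : ev (((0,0),(-2,0),(-1,1),(-1,-1)) : Q5) ∈ Img := stepImg (by decide) hh14 hg2Img
  have hh62 : ev (((-1,-1),(-2,0),(0,0),(1,-1)) : Q5) ∈ Img := stepImg (by decide) hh94 hg1Img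
  have hh2 : ev (((0,0),(4,0),(0,0),(0,0)) : Q5) ∈ Img := stepImg (by decide) hh94 hg2Img
  have hh107 : ev (((-1,1),(1,1),(0,0),(-2,0)) : Q5) ∈ Img := stepImg (by decide) hh80 hg1Img
  have hh12 : ev (((2,0),(-2,0),(2,0),(2,0)) : Q5) ∈ Img := stepImg (by decide) hh80 hg2Img
  have hh41 : ev (((0,0),(-1,1),(1,1),(2,0)) : Q5) ∈ Img := stepImg (by decide) hh16 hg1Img
  have hh44 : ev (((0,0),(1,-1),(-1,-1),(2,0)) : Q5) ∈ Img := stepImg (by decide) hh16 hg2Img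
  have hh36 : ev (((0,0),(2,0),(1,-1),(-1,-1)) : Q5) ∈ Img := stepImg (by decide) hh11 hg1Img
  have hh73 : ev (((2,0),(0,0),(1,1),(-1,1)) : Q5) ∈ Img := stepImg (by decide) hh11 hg2Img
  have hh101 : ev (((-1,1),(0,0),(2,0),(-1,-1)) : Q5) ∈ Img := stepImg (by decide) hh9 hg1Img
  have hh96 : ev (((1,-1),(0,0),(2,0),(1,1)) : Q5) ∈ Img := stepImg (by decide) hh9 hg2Img
  have hh88 : ev (((2,0),(1,-1),(0,0),(1,1)) : Q5) ∈ Img := stepImg (by decide) hh35 hg1Img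
  have hh23 : ev (((-2,0),(-2,0),(-2,0),(-2,0)) : Q5) ∈ Img := stepImg (by decide) hh35 hg2Img
  have hh111 : ev (((-1,1),(-1,-1),(0,0),(-2,0)) : Q5) ∈ Img := stepImg (by decide) hh13 hg1Img
  have hh69 : ev (((-1,-1),(-1,1),(2,0),(0,0)) : Q5) ∈ Img := stepImg (by decide) hh13 hg2Img
  have hh5 : ev (((0,0),(0,0),(-4,0),(0,0)) : Q5) ∈ Img := stepImg (by decide) hh53 hg2Img
  have hh89 : ev (((2,0),(-1,1),(0,0),(1,1)) : Q5) ∈ Img := stepImg (by decide) hh6 hg1Img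
  have hh30 : ev (((0,0),(-1,-1),(-2,0),(1,-1)) : Q5) ∈ Img := stepImg (by decide) hh6 hg2Img
  have hh78 : ev (((-2,0),(0,0),(-1,-1),(1,-1)) : Q5) ∈ Img := stepImg (by decide) hh46 hg1Img
  have hh100 : ev (((1,-1),(0,0),(2,0),(-1,-1)) : Q5) ∈ Img := stepImg (by decide) hh84 hg2Img
  have hh68 : ev (((-1,-1),(1,-1),(2,0),(0,0)) : Q5) ∈ Img := stepImg (by decide) hh55 hg1Img
  have hh27 : ev (((0,0),(1,1),(-2,0),(-1,1)) : Q5) ∈ Img := stepImg (by decide) hh55 hg2Img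
  have hh26 : ev (((0,0),(1,1),(-2,0),(1,-1)) : Q5) ∈ Img := stepImg (by decide) hh117 hg1Img
  have hh64 : ev (((1,1),(1,-1),(2,0),(0,0)) : Q5) ∈ Img := stepImg (by decide) hh117 hg2Img
  have hh8 : ev (((2,0),(2,0),(2,0),(2,0)) : Q5) ∈ Img := stepImg (by decide) hh33 hg1Img
  have hh31 : ev (((0,0),(-1,-1),(-2,0),(-1,1)) : Q5) ∈ Img := stepImg (by decide) hh33 hg2Img
  have hh19 : ev (((-2,0),(2,0),(-2,0),(-2,0)) : Q5) ∈ Img := stepImg (by decide) hh47 hg1Img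
  have hh65 : ev (((1,1),(-1,1),(2,0),(0,0)) : Q5) ∈ Img := stepImg (by decide) hh47 hg2Img
  have hh110 : ev (((1,-1),(-1,-1),(0,0),(-2,0)) : Q5) ∈ Img := stepImg (by decide) hh39 hg1Img
  have hh83 : ev (((-2,0),(1,1),(-1,1),(0,0)) : Q5) ∈ Img := stepImg (by decide) hh39 hg2Img
  have hh63 : ev (((-1,-1),(-2,0),(0,0),(-1,1)) : Q5) ∈ Img := stepImg (by decide) hh62 hg1Img
  have hh24 : ev (((0,0),(1,1),(2,0),(1,-1)) : Q5) ∈ Img := stepImg (by decide) hh2 hg1Img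
  have hh37 : ev (((0,0),(2,0),(-1,1),(-1,-1)) : Q5) ∈ Img := stepImg (by decide) hh107 hg1Img
  have hh97 : ev (((-1,1),(0,0),(2,0),(1,1)) : Q5) ∈ Img := stepImg (by decide) hh107 hg2Img
  have hh59 : ev (((1,1),(-2,0),(0,0),(-1,1)) : Q5) ∈ Img := stepImg (by decide) hh12 hg1Img
  have hh22 : ev (((-2,0),(-2,0),(-2,0),(2,0)) : Q5) ∈ Img := stepImg (by decide) hh41 hg2Img
  have hh45 : ev (((0,0),(-1,1),(-1,-1),(2,0)) : Q5) ∈ Img := stepImg (by decide) hh44 hg1Img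
  have hh92 : ev (((2,0),(1,-1),(0,0),(-1,-1)) : Q5) ∈ Img := stepImg (by decide) hh44 hg2Img
  have hh95 : ev (((-2,0),(-1,1),(0,0),(-1,-1)) : Q5) ∈ Img := stepImg (by decide) hh36 hg1Img
  have hh118 : ev (((1,-1),(-2,0),(-1,-1),(0,0)) : Q5) ∈ Img := stepImg (by decide) hh96 hg2Img
  have hh48 : ev (((1,1),(0,0),(1,-1),(2,0)) : Q5) ∈ Img := stepImg (by decide) hh88 hg1Img
  have hh70 : ev (((-1,-1),(1,-1),(-2,0),(0,0)) : Q5) ∈ Img := stepImg (by decide) hh23 hg1Img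
  have hh17 : ev (((-2,0),(2,0),(2,0),(-2,0)) : Q5) ∈ Img := stepImg (by decide) hh111 hg2Img
  have hh75 : ev (((-2,0),(0,0),(1,1),(-1,1)) : Q5) ∈ Img := stepImg (by decide) hh69 hg1Img
  have hh116 : ev (((1,-1),(2,0),(-1,-1),(0,0)) : Q5) ∈ Img := stepImg (by decide) hh5 hg1Img
  have hh51 : ev (((1,1),(0,0),(-1,1),(-2,0)) : Q5) ∈ Img := stepImg (by decide) hh5 hg2Img
  have hh57 : ev (((1,1),(2,0),(0,0),(-1,1)) : Q5) ∈ Img := stepImg (by decide) hh89 hg1Img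
  have hh3 : ev (((0,0),(-4,0),(0,0),(0,0)) : Q5) ∈ Img := stepImg (by decide) hh89 hg2Img
  have hh56 : ev (((1,1),(2,0),(0,0),(1,-1)) : Q5) ∈ Img := stepImg (by decide) hh78 hg2Img
  have hh21 : ev (((-2,0),(-2,0),(2,0),(-2,0)) : Q5) ∈ Img := stepImg (by decide) hh100 hg1Img
  have hh104 : ev (((1,-1),(1,1),(0,0),(2,0)) : Q5) ∈ Img := stepImg (by decide) hh100 hg2Img
  have hh20 : ev (((-2,0),(-2,0),(2,0),(2,0)) : Q5) ∈ Img := stepImg (by decide) hh68 hg1Img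
  have hh106 : ev (((1,-1),(1,1),(0,0),(-2,0)) : Q5) ∈ Img := stepImg (by decide) hh26 hg1Img
  have hh49 : ev (((1,1),(0,0),(-1,1),(2,0)) : Q5) ∈ Img := stepImg (by decide) hh26 hg2Img
  have hh58 : ev (((1,1),(-2,0),(0,0),(1,-1)) : Q5) ∈ Img := stepImg (by decide) hh64 hg1Img
  have hh108 : ev (((1,-1),(-1,-1),(0,0),(2,0)) : Q5) ∈ Img := stepImg (by decide) hh8 hg2Img
  have hh7 : ev (((0,0),(0,0),(0,0),(-4,0)) : Q5) ∈ Img := stepImg (by decide) hh31 hg2Img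
  have hh60 : ev (((-1,-1),(2,0),(0,0),(1,-1)) : Q5) ∈ Img := stepImg (by decide) hh19 hg1Img
  have hh86 : ev (((-2,0),(-1,-1),(1,-1),(0,0)) : Q5) ∈ Img := stepImg (by decide) hh110 hg1Img
  have hh112 : ev (((1,-1),(2,0),(1,1),(0,0)) : Q5) ∈ Img := stepImg (by decide) hh83 hg1Img
  have hh99 : ev (((-1,1),(0,0),(-2,0),(1,1)) : Q5) ∈ Img := stepImg (by decide) hh83 hg2Img
  have hh43 : ev (((0,0),(-1,1),(1,1),(-2,0)) : Q5) ∈ Img := stepImg (by decide) hh24 hg1Img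
  have hh66 : ev (((1,1),(1,-1),(-2,0),(0,0)) : Q5) ∈ Img := stepImg (by decide) hh59 hg1Img
  have hh98 : ev (((1,-1),(0,0),(-2,0),(1,1)) : Q5) ∈ Img := stepImg (by decide) hh22 hg1Img
  have hh38 : ev (((0,0),(-2,0),(1,-1),(-1,-1)) : Q5) ∈ Img := stepImg (by decide) hh92 hg1Img
  have hh105 : ev (((-1,1),(1,1),(0,0),(2,0)) : Q5) ∈ Img := stepImg (by decide) hh95 hg2Img
  have hh79 : ev (((-2,0),(0,0),(-1,-1),(-1,1)) : Q5) ∈ Img := stepImg (by decide) hh118 hg1Img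
  have hh93 : ev (((2,0),(-1,1),(0,0),(-1,-1)) : Q5) ∈ Img := stepImg (by decide) hh118 hg2Img
  have hh28 : ev (((0,0),(-1,-1),(2,0),(1,-1)) : Q5) ∈ Img := stepImg (by decide) hh48 hg2Img
  have hh74 : ev (((-2,0),(0,0),(1,1),(1,-1)) : Q5) ∈ Img := stepImg (by decide) hh17 hg1Img
  have hh32 : ev (((0,0),(2,0),(1,-1),(1,1)) : Q5) ∈ Img := stepImg (by decide) hh17 hg2Img
  have hh40 : ev (((0,0),(1,-1),(1,1),(2,0)) : Q5) ∈ Img := stepImg (by decide) hh75 hg1Img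
  have hh82 : ev (((-2,0),(1,1),(1,-1),(0,0)) : Q5) ∈ Img := stepImg (by decide) hh116 hg1Img
  have hh87 : ev (((-2,0),(-1,-1),(-1,1),(0,0)) : Q5) ∈ Img := stepImg (by decide) hh21 hg1Img
  have hh25 : ev (((0,0),(1,1),(2,0),(-1,1)) : Q5) ∈ Img := stepImg (by decide) hh104 hg1Img
  have hh15 : ev (((2,0),(-2,0),(-2,0),(-2,0)) : Q5) ∈ Img := stepImg (by decide) hh58 hg1Img
  have hh34 : ev (((0,0),(-2,0),(1,-1),(1,1)) : Q5) ∈ Img := stepImg (by decide) hh108 hg1Img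
  have hh10 : ev (((2,0),(2,0),(-2,0),(2,0)) : Q5) ∈ Img := stepImg (by decide) hh60 hg2Img
  have hh42 : ev (((0,0),(1,-1),(1,1),(-2,0)) : Q5) ∈ Img := stepImg (by decide) hh43 hg1Img
  have hh18 : ev (((-2,0),(2,0),(-2,0),(2,0)) : Q5) ∈ Img := stepImg (by decide) hh79 hg1Img
  intro s hs
  fin_cases hs <;> assumption
/-- The subgroup of the multiplicative group of the real quaternions generated by the two
spinor generators `R₁ = ι(α₁)ι(α₂)` and `R₂ = ι(α₂)ι(α₃)`, where `α₁ = (−1,0,0)`,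
`α₂ = ½(τ,1,σ)`, `α₃ = (0,0,−1)` are the simple roots of `H₃`, is exactly the 120-element
set of icosians (the binary icosahedral group, the root system of `H₄`). -/
theorem H3_spinor_generators_generate_icosians :
    Units.val '' ((Subgroup.closure
        {u : (Quaternion ℝ)ˣ |
          (u : Quaternion ℝ) = iota (vec3 (-1) 0 0) * iota ((2:ℝ)⁻¹ • vec3 gr 1 gs) ∨
          (u : Quaternion ℝ) = iota ((2:ℝ)⁻¹ • vec3 gr 1 gs) * iota (vec3 0 0 (-1))} :
        Subgroup (Quaternion ℝ)ˣ) : Set (Quaternion ℝ)ˣ) = Icosians := by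
  apply Set.Subset.antisymm
  · rintro x ⟨u, hu, rfl⟩
    refine Subgroup.closure_induction_right
      (p := fun v _ => ((v : (Quaternion ℝ)ˣ) : Quaternion ℝ) ∈ Icosians) ?_ ?_ ?_ hu
    · show ((1 : (Quaternion ℝ)ˣ) : Quaternion ℝ) ∈ Icosians
      rw [Units.val_one, ← ev_one]
      exact evS_mem one5 (by decide)
    · intro v hv y hy hvI
      obtain ⟨s, hsS, hse⟩ := icos_toS _ hvI
      show ((v * y : (Quaternion ℝ)ˣ) : Quaternion ℝ) ∈ Icosians
      rw [Units.val_mul, ← hse]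
      rcases hy with h | h
      · obtain ⟨c, hcS, hc⟩ := SmulG1 s hsS
        rw [h, ← R1ev, ev_mul_of hc]
        exact evS_mem c hcS
      · obtain ⟨c, hcS, hc⟩ := SmulG2 s hsS
        rw [h, ← R2ev, ev_mul_of hc]
        exact evS_mem c hcS
    · intro v hv y hy hvI
      obtain ⟨s, hsS, hse⟩ := icos_toS _ hvI
      show ((v * y⁻¹ : (Quaternion ℝ)ˣ) : Quaternion ℝ) ∈ Icosians
      rw [Units.val_mul, ← hse, Units.val_inv_eq_inv_val]
      rcases hy with h | h
      · obtain ⟨c, hcS, hc⟩ := SmulG1c s hsS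
        rw [h, ← R1ev, inv_ev_g1, ev_mul_of hc]
        exact evS_mem c hcS
      · obtain ⟨c, hcS, hc⟩ := SmulG2c s hsS
        rw [h, ← R2ev, inv_ev_g2, ev_mul_of hc]
        exact evS_mem c hcS
  · intro x hx
    obtain ⟨s, hsS, rfl⟩ := icos_toS x hx
    exact allS s hsS
end
end
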